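/- arXiv:1705.06952 — 5 statements merged into one kernel-verified Lean document; each statement's English description precedes it below -/
import Mathlib

section
/- For any positive integer n, the number of isomorphism classes of groups of order n equals 1 if and only if gcd(n, φ(n)) = 1, where φ is Euler's totient function. -/
/-- The setoid of isomorphism of groups of order `n`. -/
def grpIsoSetoid (n : ℕ) : Setoid {G : GrpCat.{0} // Nat.card G = n} where
  r G H := Nonempty (G.1 ≃* H.1)
  iseqv := ⟨fun _ => ⟨MulEquiv.refl _⟩, fun ⟨e⟩ => ⟨e.symm⟩, fun ⟨e⟩ ⟨f⟩ => ⟨e.trans f⟩⟩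

/-- The number of isomorphism classes of groups of order `n`. -/
noncomputable def groupCount (n : ℕ) : ℕ := Nat.card (Quotient (grpIsoSetoid n))


lemma hered {d n : ℕ} (hd : d ∣ n) (h : n.Coprime n.totient) : d.Coprime d.totient :=
  Nat.Coprime.coprime_dvd_left hd (Nat.Coprime.coprime_dvd_right (Nat.totient_dvd_of_dvd hd) h)

lemma sqf_of_coprime {n : ℕ} (h : n.Coprime n.totient) : Squarefree n := by
  rw [Nat.squarefree_iff_prime_squarefree]
  rintro p hp ⟨m, rfl⟩
  have hp' : p.Prime := hp
  have h1 : p ∣ (p * p * m).totient := by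
    have he : p * p * m = p * (p * m) := by ring
    rw [he, Nat.totient_mul_of_prime_of_dvd hp' (dvd_mul_right p m)]
    exact dvd_mul_right _ _
  have h2 : p ∣ Nat.gcd (p * p * m) ((p * p * m).totient) :=
    Nat.dvd_gcd ⟨p * m, by ring⟩ h1
  rw [h] at h2
  exact hp'.one_lt.ne' (Nat.dvd_one.mp h2)

lemma comm_sqf_cyclic {G : Type*} [Group G] [Finite G] (hc : ∀ a b : G, a * b = b * a)
    (hsq : Squarefree (Nat.card G)) : IsCyclic G := by
  letI : CommGroup G := { ‹Group G› with mul_comm := hc }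
  have hfin : Monoid.ExponentExists G := Monoid.ExponentExists.of_finite
  obtain ⟨g, hg⟩ := Monoid.exists_orderOf_eq_exponent hfin
  have : Fintype G := Fintype.ofFinite G
  have hdvd : Monoid.exponent G ∣ Nat.card G := by
    rw [Nat.card_eq_fintype_card]; exact Group.exponent_dvd_card
  have hn0 : Nat.card G ≠ 0 := Nat.card_pos.ne'
  have he0 : Monoid.exponent G ≠ 0 := Monoid.exponent_ne_zero_of_finite
  have hdvd2 : Nat.card G ∣ Monoid.exponent G := by
    rw [← Nat.factorization_le_iff_dvd hn0 he0]
    intro p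
    by_cases hp : p.Prime ∧ p ∣ Nat.card G
    · obtain ⟨hp, hpd⟩ := hp
      have h1 : (Nat.card G).factorization p ≤ 1 := hsq.natFactorization_le_one p
      obtain ⟨x, hx⟩ : ∃ x : G, orderOf x = p := by
        have := Fact.mk hp
        exact exists_prime_orderOf_dvd_card p (by rwa [← Nat.card_eq_fintype_card])
      have h2 : 1 ≤ (Monoid.exponent G).factorization p :=
        Nat.Prime.factorization_pos_of_dvd hp he0 (hx ▸ Monoid.order_dvd_exponent x)
      exact h1.trans h2
    · have : (Nat.card G).factorization p = 0 := by
        rw [Nat.factorization_eq_zero_iff]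
        rcases Decidable.not_and_iff_or_not.mp hp with h | h
        · exact Or.inl h
        · exact Or.inr (Or.inl h)
      exact this ▸ Nat.zero_le _
  have hcard := Nat.dvd_antisymm hdvd hdvd2
  exact isCyclic_of_orderOf_eq_card g (by rw [hg, hcard])

theorem cyclic_aux : ∀ (n : ℕ) (G : Type) [Group G], Nat.card G = n → n.Coprime n.totient →
    IsCyclic G := by
  intro n
  induction n using Nat.strong_induction_on with
  | _ n ih =>
    intro G _ hcard hco
    rcases Nat.lt_or_ge n 2 with hn2 | hn2
    · interval_cases n
      · simp [Nat.Coprime] at hco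
      · have : Subsingleton G := (Nat.card_eq_one_iff_unique.mp hcard).1
        infer_instance
    · -- n ≥ 2
      have hn0 : n ≠ 0 := by omega
      have hfin : Finite G := Nat.finite_of_card_ne_zero (hcard ▸ hn0)
      have hsq : Squarefree n := sqf_of_coprime hco
      set p := n.minFac with hpdef
      have hp : p.Prime := Nat.minFac_prime (by omega)
      have hpn : p ∣ n := Nat.minFac_dvd n
      have := Fact.mk hp
      obtain ⟨P⟩ : Nonempty (Sylow p G) := inferInstance
      -- order of P is p
      have hcardP : Nat.card P = p := by
        rw [Sylow.card_eq_multiplicity, hcard]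
        have h1 : n.factorization p ≤ 1 := hsq.natFactorization_le_one p
        have h2 : 1 ≤ n.factorization p := hp.factorization_pos_of_dvd hn0 hpn
        rw [le_antisymm h1 h2, pow_one]
      -- orderOf-based triviality helper
      have key : ∀ (M : Type) [Group M] (g : M), orderOf g ∣ n → orderOf g ∣ n.totient → g = 1 := by
        intro M _ g h1 h2
        have : orderOf g ∣ 1 := hco ▸ Nat.dvd_gcd h1 h2
        exact orderOf_eq_one_iff.mp (Nat.dvd_one.mp this)
      -- Burnside hypothesis
      have hP : Subgroup.normalizer ((P : Subgroup G) : Set G) ≤ Subgroup.centralizer ((P : Subgroup G) : Set G) := by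
        intro x hx
        have hker : (⟨x, hx⟩ : Subgroup.normalizer ((P : Subgroup G) : Set G)) ∈
            (Subgroup.normalizerMonoidHom (P : Subgroup G)).ker := by
          rw [MonoidHom.mem_ker]
          apply key
          · calc orderOf (Subgroup.normalizerMonoidHom (P : Subgroup G) ⟨x, hx⟩)
                ∣ orderOf (⟨x, hx⟩ : Subgroup.normalizer ((P : Subgroup G) : Set G)) := orderOf_map_dvd _ _
              _ ∣ Nat.card (Subgroup.normalizer ((P : Subgroup G) : Set G)) := orderOf_dvd_natCard _
              _ ∣ Nat.card G := Subgroup.card_subgroup_dvd_card _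
              _ = n := hcard
          · have hcyc : IsCyclic (P : Subgroup G) := isCyclic_of_prime_card hcardP
            calc orderOf (Subgroup.normalizerMonoidHom (P : Subgroup G) ⟨x, hx⟩)
                ∣ Nat.card (MulAut (P : Subgroup G)) := orderOf_dvd_natCard _
              _ = Nat.totient p := by rw [hcyc.card_mulAut, hcardP]
              _ ∣ n.totient := Nat.totient_dvd_of_dvd hpn
        rw [Subgroup.normalizerMonoidHom_ker, Subgroup.mem_subgroupOf] at hker
        exact hker
      set K := (MonoidHom.transferSylow P hP).ker with hKdef
      have hcom : Subgroup.IsComplement' K (P : Subgroup G) :=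
        MonoidHom.ker_transferSylow_isComplement' P hP
      have hmul : Nat.card K * Nat.card P = Nat.card G := hcom.card_mul
      have hKd : Nat.card K ∣ n := hcard ▸ Subgroup.card_subgroup_dvd_card K
      have hKlt : Nat.card K < n := by
        have h1 : Nat.card K * p = n := by rw [← hcardP, hmul, hcard]
        have h2 : Nat.card K * 2 ≤ Nat.card K * p := Nat.mul_le_mul_left _ hp.two_le
        have h3 : 0 < Nat.card K := Nat.card_pos
        omega
      haveI hKcyc : IsCyclic K := ih _ hKlt K rfl (hered hKd hco)
      have hKcentral : ∀ k ∈ K, ∀ g : G, g * k = k * g := by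
        intro k hk g
        have h1 : MulAut.conjNormal (H := K) g = 1 := by
          apply key
          · calc orderOf (MulAut.conjNormal (H := K) g) ∣ orderOf g := orderOf_map_dvd _ _
              _ ∣ Nat.card G := orderOf_dvd_natCard _
              _ = n := hcard
          · calc orderOf (MulAut.conjNormal (H := K) g) ∣ Nat.card (MulAut K) :=
                orderOf_dvd_natCard _
              _ = Nat.totient (Nat.card K) := hKcyc.card_mulAut
              _ ∣ n.totient := Nat.totient_dvd_of_dvd hKd
        have h2 : ((MulAut.conjNormal g ⟨k, hk⟩ : K) : G) = ((⟨k, hk⟩ : K) : G) := by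
          rw [h1]; rfl
        rw [MulAut.conjNormal_apply] at h2
        have h3 : g * k * g⁻¹ = k := h2
        exact mul_inv_eq_iff_eq_mul.mp h3
      have hquot : IsCyclic (G ⧸ K) := by
        apply isCyclic_of_prime_card (p := p)
        calc Nat.card (G ⧸ K) = K.index := rfl
          _ = Nat.card (P : Subgroup G) := hcom.symm.index_eq_card
          _ = p := hcardP
      letI : CommGroup G := commGroupOfCyclicCenterQuotient (QuotientGroup.mk' K) (by
        rw [QuotientGroup.ker_mk']
        intro k hk
        rw [Subgroup.mem_center_iff]
        intro g
        exact hKcentral k hk g)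
      exact comm_sqf_cyclic mul_comm (hcard ▸ hsq)


-- extraction of p, q
lemma exists_pq {n : ℕ} (hn : 0 < n) (hsq : Squarefree n) (h : ¬ n.Coprime n.totient) :
    ∃ p q : ℕ, p.Prime ∧ q.Prime ∧ p ∣ q - 1 ∧ p ≠ q ∧ p * q ∣ n := by
  have hn0 : n ≠ 0 := hn.ne'
  set d := Nat.gcd n n.totient with hd
  have hd2 : 2 ≤ d := by
    rcases Nat.lt_or_ge d 2 with h2 | h2
    · interval_cases d
      · exact absurd (Nat.eq_zero_of_gcd_eq_zero_left hd.symm) hn0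
      · exact absurd hd.symm h
    · exact h2
  set r := d.minFac with hr
  have hrp : r.Prime := Nat.minFac_prime (by omega)
  have hrn : r ∣ n := (Nat.minFac_dvd d).trans (Nat.gcd_dvd_left _ _)
  have hrt : r ∣ n.totient := (Nat.minFac_dvd d).trans (Nat.gcd_dvd_right _ _)
  rw [Nat.totient_eq_prod_factorization hn0] at hrt
  rw [Finsupp.prod] at hrt
  obtain ⟨q, hqmem, hqdvd⟩ := (hrp.prime.dvd_finset_prod_iff _).mp hrt
  have hqn : q ∣ n := Nat.dvd_of_mem_primeFactors (by rwa [← Nat.support_factorization])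
  have hqp : q.Prime := Nat.prime_of_mem_primeFactors (by rwa [← Nat.support_factorization])
  have hfq : n.factorization q = 1 := by
    have h1 : n.factorization q ≤ 1 := hsq.natFactorization_le_one q
    have h2 : 1 ≤ n.factorization q := hqp.factorization_pos_of_dvd hn0 hqn
    omega
  rw [hfq] at hqdvd
  simp only [Nat.sub_self, pow_zero, one_mul] at hqdvd
  have hne : r ≠ q := by
    intro hrq
    have hq1 : 0 < q - 1 := by have := hqp.two_le; omega
    have := Nat.le_of_dvd hq1 hqdvd
    omega
  exact ⟨r, q, hrp, hqp, hqdvd, hne,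
    (Nat.Coprime.mul_dvd_of_dvd_of_dvd ((Nat.coprime_primes hrp hqp).mpr hne) hrn hqn)⟩

def addAutToMulAut (A : Type*) [AddZeroClass A] : Multiplicative (AddAut A) →* MulAut (Multiplicative A) where
  toFun f := AddEquiv.toMultiplicative (Multiplicative.toAdd f)
  map_one' := rfl
  map_mul' _ _ := rfl

lemma nonabelian_pq {p q : ℕ} (hp : p.Prime) (hq : q.Prime) (hdvd : p ∣ q - 1) :
    ∃ (N : Type) (_ : Group N), Nat.card N = p * q ∧ ∃ a b : N, a * b ≠ b * a := by
  haveI := Fact.mk hq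
  haveI := Fact.mk hp
  have hcard : Fintype.card (ZMod q)ˣ = q - 1 := by
    rw [ZMod.card_units_eq_totient, Nat.totient_prime hq]
  obtain ⟨u, hu⟩ := exists_prime_orderOf_dvd_card (G := (ZMod q)ˣ) p (by rw [hcard]; exact hdvd)
  set K := Multiplicative (ZMod q) with hK
  set H := Subgroup.zpowers u with hH
  set φ : H →* MulAut K :=
    (addAutToMulAut (ZMod q)).comp ((AddAut.mulLeft (R := ZMod q)).comp H.subtype) with hφ
  refine ⟨K ⋊[φ] H, inferInstance, ?_, ?_⟩
  · have e : (K ⋊[φ] H) ≃ K × H :=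
      ⟨fun g => (g.left, g.right), fun x => ⟨x.1, x.2⟩, fun _ => rfl, fun _ => rfl⟩
    rw [Nat.card_congr e, Nat.card_prod]
    have h1 : Nat.card K = q := by
      rw [Nat.card_congr (Multiplicative.toAdd (α := ZMod q)), Nat.card_zmod]
    have h2 : Nat.card H = p := by rw [hH, Nat.card_zpowers, hu]
    rw [h1, h2, mul_comm]
  · refine ⟨SemidirectProduct.inl (Multiplicative.ofAdd (1 : ZMod q)),
      SemidirectProduct.inr ⟨u, Subgroup.mem_zpowers u⟩, fun hcontra => ?_⟩
    have h1 := congrArg SemidirectProduct.left hcontra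
    simp only [SemidirectProduct.mul_left, SemidirectProduct.left_inl,
      SemidirectProduct.right_inl, SemidirectProduct.left_inr, SemidirectProduct.right_inr,
      map_one, MulAut.one_apply, mul_one, one_mul] at h1
    -- h1 : ofAdd 1 = φ ⟨u, _⟩ (ofAdd 1)
    have h2 : φ ⟨u, Subgroup.mem_zpowers u⟩ (Multiplicative.ofAdd (1 : ZMod q)) =
        Multiplicative.ofAdd ((u : ZMod q) * 1) := rfl
    rw [h2] at h1
    have h3 : (u : ZMod q) = 1 := by
      have := congrArg Multiplicative.toAdd h1
      simpa using this.symm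
    have h4 : u = 1 := Units.ext (by simpa using h3)
    rw [h4, orderOf_one] at hu
    exact hp.one_lt.ne' hu.symm

lemma exists_noniso {n : ℕ} (hn : 0 < n) (h : ¬ n.Coprime n.totient) :
    ∃ (G H : Type) (_ : Group G) (_ : Group H), Nat.card G = n ∧ Nat.card H = n ∧
      IsEmpty (G ≃* H) := by
  have hn0 : n ≠ 0 := hn.ne'
  haveI : NeZero n := ⟨hn0⟩
  by_cases hsq : Squarefree n
  · -- squarefree, non-coprime: nonabelian group exists
    obtain ⟨p, q, hp, hq, hdvd, hne, hpqn⟩ := exists_pq hn hsq h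
    obtain ⟨N, _, hNcard, a, b, hab⟩ := nonabelian_pq hp hq hdvd
    set m := n / (p * q) with hm
    have hm0 : m ≠ 0 := by
      rw [hm]
      exact Nat.div_ne_zero_iff.mpr ⟨Nat.mul_ne_zero hp.pos.ne' hq.pos.ne', Nat.le_of_dvd hn hpqn⟩
    haveI : NeZero m := ⟨hm0⟩
    refine ⟨Multiplicative (ZMod n), N × Multiplicative (ZMod m), inferInstance, inferInstance,
      ?_, ?_, ?_⟩
    · rw [Nat.card_congr (Multiplicative.toAdd (α := ZMod n)), Nat.card_zmod]
    · rw [Nat.card_prod, hNcard, Nat.card_congr (Multiplicative.toAdd (α := ZMod m)),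
        Nat.card_zmod, hm, Nat.mul_div_cancel' hpqn]
    · constructor
      intro e
      have hcomm : ∀ x y : N × Multiplicative (ZMod m), x * y = y * x := by
        intro x y
        rw [← e.apply_symm_apply (x * y), ← e.apply_symm_apply (y * x)]
        congr 1
        rw [map_mul, map_mul, mul_comm]
      have := congrArg Prod.fst (hcomm (a, 1) (b, 1))
      exact hab this
  · -- not squarefree
    rw [Nat.squarefree_iff_prime_squarefree] at hsq
    push_neg at hsq
    obtain ⟨p, hp', hpp⟩ := hsq
    have hp : p.Prime := hp'
    have hpn : p ∣ n := (dvd_mul_right p p).trans hpp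
    set m := n / p with hm
    have hpm : p ∣ m := (Nat.dvd_div_iff_mul_dvd hpn).mpr hpp
    have hm0 : m ≠ 0 := by
      rw [hm]
      exact Nat.div_ne_zero_iff.mpr ⟨hp.pos.ne', Nat.le_of_dvd hn hpn⟩
    haveI : NeZero m := ⟨hm0⟩
    haveI := Fact.mk hp
    refine ⟨Multiplicative (ZMod n), Multiplicative (ZMod p) × Multiplicative (ZMod m),
      inferInstance, inferInstance, ?_, ?_, ?_⟩
    · rw [Nat.card_congr (Multiplicative.toAdd (α := ZMod n)), Nat.card_zmod]
    · rw [Nat.card_prod, Nat.card_congr (Multiplicative.toAdd (α := ZMod p)),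
        Nat.card_congr (Multiplicative.toAdd (α := ZMod m)), Nat.card_zmod, Nat.card_zmod,
        hm, Nat.mul_div_cancel' hpn]
    · constructor
      intro e
      set x := Multiplicative.ofAdd (1 : ZMod n) with hx
      have ho : orderOf x = n := by
        rw [hx, orderOf_ofAdd_eq_addOrderOf, ZMod.addOrderOf_one]
      have hpow : ∀ y : Multiplicative (ZMod p) × Multiplicative (ZMod m), y ^ m = 1 := by
        intro y
        have h1 : y.1 ^ m = 1 := by
          apply Multiplicative.toAdd.injective
          rw [toAdd_pow, nsmul_eq_mul, (ZMod.natCast_eq_zero_iff m p).mpr hpm,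
            zero_mul, toAdd_one]
        have h2 : y.2 ^ m = 1 := by
          apply Multiplicative.toAdd.injective
          rw [toAdd_pow, nsmul_eq_mul, ZMod.natCast_self, zero_mul, toAdd_one]
        exact Prod.ext h1 h2
      have hdvd2 : n ∣ m := by
        rw [← ho, ← e.orderOf_eq x]
        exact orderOf_dvd_of_pow_eq_one (hpow (e x))
      have : n ≤ m := Nat.le_of_dvd (Nat.pos_of_ne_zero hm0) hdvd2
      have : m < n := Nat.div_lt_self hn hp.one_lt
      omega


theorem stmt_0 (n : ℕ) (hn : 0 < n) :
    groupCount n = 1 ↔ Nat.gcd n (Nat.totient n) = 1 := by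
  constructor
  · intro h1
    by_contra hne
    obtain ⟨G, H, _, _, hG, hH, hempty⟩ := exists_noniso hn hne
    have hsub : Subsingleton (Quotient (grpIsoSetoid n)) := (Nat.card_eq_one_iff_unique.mp h1).1
    have heq : (⟦⟨GrpCat.of G, hG⟩⟧ : Quotient (grpIsoSetoid n)) = ⟦⟨GrpCat.of H, hH⟩⟧ :=
      Subsingleton.elim _ _
    have h2 := Quotient.exact heq
    exact hempty.false h2.some
  · intro hco
    rw [groupCount, Nat.card_eq_one_iff_unique]
    haveI : NeZero n := ⟨hn.ne'⟩
    refine ⟨⟨fun a b => ?_⟩, ⟨⟦⟨GrpCat.of (Multiplicative (ZMod n)), by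
      show Nat.card (Multiplicative (ZMod n)) = n
      rw [Nat.card_congr (Multiplicative.toAdd (α := ZMod n)), Nat.card_zmod]⟩⟧⟩⟩
    refine Quotient.inductionOn₂ a b (fun G H => ?_)
    apply Quotient.sound
    haveI : Finite ↥G.1 := Nat.finite_of_card_ne_zero (by rw [G.2]; exact hn.ne')
    haveI : Finite ↥H.1 := Nat.finite_of_card_ne_zero (by rw [H.2]; exact hn.ne')
    haveI : IsCyclic ↥G.1 := cyclic_aux n _ G.2 hco
    haveI : IsCyclic ↥H.1 := cyclic_aux n _ H.2 hco
    exact ⟨mulEquivOfCyclicCardEq (by rw [G.2, H.2])⟩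
end

section
/- Let n = p_1^{a_1} ··· p_t^{a_t} with distinct primes p_i. Every group of order n is nilpotent if and only if for all i, j and all k with 1 ≤ k ≤ a_i, p_i^k is not congruent to 1 modulo p_j. -/
open Subgroup Pointwise

set_option linter.unusedSectionVars false
set_option maxHeartbeats 1000000

section Part0

-- Lemma L: a nontrivial automorphism of prime order r of a finite q-group forces q^k ≡ 1 mod r.
lemma lemL {q r : ℕ} (hq : q.Prime) (hr : r.Prime) (hne : r ≠ q) {A : Type*} [Group A] [Finite A]
    {c : ℕ} (hA : Nat.card A = q ^ c) (α : MulAut A) (hα : α ≠ 1) (hord : orderOf α = r) :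
    ∃ k, 1 ≤ k ∧ k ≤ c ∧ q ^ k ≡ 1 [MOD r] := by
  haveI : Fact r.Prime := ⟨hr⟩
  -- the cyclic group generated by α is an r-group acting on A
  let Z := Subgroup.zpowers α
  have hZ : IsPGroup r Z := by
    apply IsPGroup.of_card
    rw [Nat.card_zpowers, hord, pow_one]
  -- fixed points
  have hfix := hZ.card_modEq_card_fixedPoints A
  -- fixed points of Z-action equal fixed points of α
  let F : Subgroup A := {
    carrier := {a | α a = a}
    one_mem' := by simp
    mul_mem' := by intro a b ha hb; simp only [Set.mem_setOf_eq, map_mul] at *; rw [ha, hb]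
    inv_mem' := by intro a ha; simp only [Set.mem_setOf_eq, map_inv] at *; rw [ha] }
  have hFP : (MulAction.fixedPoints Z A) = (F : Set A) := by
    ext a
    constructor
    · intro h
      exact h ⟨α, Subgroup.mem_zpowers α⟩
    · rintro (h : α a = a) ⟨g, hg⟩
      have hst : α ∈ MulAction.stabilizer (MulAut A) a := h
      have : Subgroup.zpowers α ≤ MulAction.stabilizer (MulAut A) a :=
        Subgroup.zpowers_le.mpr hst
      exact this hg
  have hcF : Nat.card (MulAction.fixedPoints Z A) = Nat.card F := by
    rw [hFP]; rfl
  -- F is a subgroup of A hence has q-power order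
  have hFq : IsPGroup q F := IsPGroup.to_subgroup (IsPGroup.of_card hA) F
  haveI : Fact q.Prime := ⟨hq⟩
  obtain ⟨e, he⟩ := (IsPGroup.iff_card).mp hFq
  -- e < c since F ≠ ⊤
  have hFne : F ≠ ⊤ := by
    intro h
    apply hα
    ext a
    have : a ∈ F := h ▸ Subgroup.mem_top a
    exact this
  have hecard : Nat.card F < Nat.card A := by
    have hle : Nat.card F ≤ Nat.card A := Subgroup.card_le_card_group F
    rcases lt_or_eq_of_le hle with h | h
    · exact h
    · exfalso; apply hFne
      exact Subgroup.eq_top_of_card_eq F (by rw [h])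
  have helt : e < c := by
    by_contra h
    push_neg at h
    have : Nat.card A ≤ Nat.card F := by
      rw [hA, he]
      exact Nat.pow_le_pow_right hq.pos h
    omega
  -- congruence
  rw [hA, hcF, he] at hfix
  -- q^c ≡ q^e [MOD r], cancel q^e
  have hcop : Nat.Coprime (q ^ e) r := by
    apply Nat.Coprime.pow_left
    rw [Nat.coprime_primes hq hr] at *
    · exact fun h => hne h.symm
  have : q ^ (c - e) * q ^ e ≡ 1 * q ^ e [MOD r] := by
    rw [← pow_add, Nat.sub_add_cancel helt.le, one_mul]
    exact hfix
  have := Nat.ModEq.cancel_right_of_coprime (by rwa [Nat.coprime_comm] at hcop) this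
  exact ⟨c - e, by omega, by omega, this⟩

end Part0

section Part1

lemma keyStep {G : Type} [Group G] [Finite G] {q : ℕ} (hq : q.Prime)
    (S : Subgroup G) [hS : S.Normal] (hSp : IsPGroup q S) (hSnt : S ≠ ⊥)
    (hcop : ¬ q ∣ S.index)
    (hcond : ∀ r : ℕ, r.Prime → r ∣ Nat.card G → ∀ k : ℕ, 1 ≤ k → q ^ k ∣ Nat.card G →
      ¬ (q ^ k ≡ 1 [MOD r])) :
    Nontrivial (Subgroup.center G) := by
  haveI : Fact q.Prime := ⟨hq⟩
  set ZS : Subgroup G := S ⊓ Subgroup.centralizer S with hZSdef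
  -- ZS is normal
  haveI hZSn : ZS.Normal := by
    constructor
    rintro z ⟨hz1, hz2⟩ g
    constructor
    · exact hS.conj_mem z hz1 g
    · show g * z * g⁻¹ ∈ Subgroup.centralizer (S : Set G)
      rw [Subgroup.mem_centralizer_iff]
      intro s hs
      have hz2' : z ∈ Subgroup.centralizer (S : Set G) := hz2
      rw [Subgroup.mem_centralizer_iff] at hz2'
      have hs' : g⁻¹ * s * g ∈ S := by
        have := hS.conj_mem s hs g⁻¹
        simpa using this
      have hcomm := hz2' _ hs'
      -- s * (g z g⁻¹) = (g z g⁻¹) * s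
      have : g * ((g⁻¹ * s * g) * z) * g⁻¹ = g * (z * (g⁻¹ * s * g)) * g⁻¹ := by rw [hcomm]
      calc s * (g * z * g⁻¹) = g * ((g⁻¹ * s * g) * z) * g⁻¹ := by group
        _ = g * (z * (g⁻¹ * s * g)) * g⁻¹ := this
        _ = g * z * g⁻¹ * s := by group
  -- ZS is nontrivial
  haveI hSnontriv : Nontrivial ↥S := by
    rw [Subgroup.nontrivial_iff_ne_bot]; exact hSnt
  haveI hcenter := hSp.center_nontrivial
  obtain ⟨⟨z, hzc⟩, hzne⟩ := exists_ne (1 : Subgroup.center ↥S)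
  have hzZS : (z : G) ∈ ZS := by
    constructor
    · exact z.2
    · show (z : G) ∈ Subgroup.centralizer (S : Set G)
      rw [Subgroup.mem_centralizer_iff]
      intro s hs
      have := (Subgroup.mem_center_iff.mp hzc) ⟨s, hs⟩
      exact congrArg Subtype.val this
  have hzne' : (z : G) ≠ 1 := by
    intro h
    apply hzne
    ext
    simpa using h
  -- conjugation action on ZS
  let c : G →* MulAut ↥ZS := MulAut.conjNormal
  -- S is in the kernel
  have hSker : S ≤ c.ker := by
    intro s hs
    rw [MonoidHom.mem_ker]
    ext z
    obtain ⟨z, hz⟩ := z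
    have hz2 : z ∈ Subgroup.centralizer (S : Set G) := hz.2
    rw [Subgroup.mem_centralizer_iff] at hz2
    have h2 := hz2 s hs
    show s * z * s⁻¹ = z
    rw [h2]; group
  -- the range is trivial
  have hrange : ∀ g : G, c g = 1 := by
    by_contra hne
    push_neg at hne
    obtain ⟨g, hg⟩ := hne
    have hrnt : Nontrivial ↥c.range := by
      refine ⟨⟨⟨c g, ⟨g, rfl⟩⟩, 1, ?_⟩⟩
      intro h
      exact hg (by simpa using congrArg Subtype.val h)
    -- pick a prime r dividing card of range
    have hcard2 : 2 ≤ Nat.card ↥c.range := Finite.one_lt_card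
    obtain ⟨r, hr, hrdvd⟩ := (Nat.card ↥c.range).exists_prime_and_dvd (by omega)
    -- r divides index of S
    have hrange_dvd : Nat.card ↥c.range ∣ S.index := by
      rw [← Subgroup.index_ker c]
      exact Subgroup.index_dvd_of_le hSker
    have hrq : r ≠ q := by
      rintro rfl
      exact hcop (dvd_trans (dvd_trans hrdvd hrange_dvd) dvd_rfl)
    -- get an element of order r in the range
    haveI : Fact r.Prime := ⟨hr⟩
    haveI : Fintype ↥c.range := Fintype.ofFinite _
    obtain ⟨α', hα'⟩ := exists_prime_orderOf_dvd_card (G := ↥c.range) r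
      (by rwa [← Nat.card_eq_fintype_card])
    have hordα : orderOf (α' : MulAut ↥ZS) = r := by
      rw [← hα']
      exact orderOf_coe α'
    have hαne : (α' : MulAut ↥ZS) ≠ 1 := by
      intro h
      rw [h, orderOf_one] at hordα
      exact hr.one_lt.ne' hordα.symm
    -- ZS is a q-group
    have hZSq : IsPGroup q ↥ZS := by
      intro x
      obtain ⟨k, hk⟩ := hSp ⟨x.1, x.2.1⟩
      refine ⟨k, ?_⟩
      have : ((x : G)) ^ q ^ k = 1 := by
        have := congrArg Subtype.val hk
        simpa using this
      ext
      simpa using this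
    obtain ⟨cc, hcc⟩ := (IsPGroup.iff_card (p := q) (G := ↥ZS)).mp hZSq
    have hccpos : 1 ≤ cc := by
      rcases Nat.eq_zero_or_pos cc with h | h
      · exfalso
        rw [h, pow_zero] at hcc
        have : ZS = ⊥ := Subgroup.card_eq_one.mp hcc
        rw [this] at hzZS
        exact hzne' (Subgroup.mem_bot.mp hzZS)
      · exact h
    obtain ⟨k, hk1, hkc, hkmod⟩ := lemL hq hr hrq hcc (α' : MulAut ↥ZS) hαne hordα
    -- contradiction with hcond
    refine hcond r hr ?_ k hk1 ?_ hkmod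
    · -- r ∣ card G
      calc r ∣ Nat.card ↥c.range := hrdvd
        _ ∣ S.index := hrange_dvd
        _ ∣ Nat.card G := Subgroup.index_dvd_card S
    · -- q ^ k ∣ card G
      calc q ^ k ∣ q ^ cc := pow_dvd_pow q hkc
        _ = Nat.card ↥ZS := hcc.symm
        _ ∣ Nat.card G := Subgroup.card_subgroup_dvd_card ZS
  -- conclude ZS ≤ center
  have hle : ZS ≤ Subgroup.center G := by
    intro z hz
    rw [Subgroup.mem_center_iff]
    intro g
    have := hrange g
    have happ : c g ⟨z, hz⟩ = ⟨z, hz⟩ := by rw [this]; rfl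
    have : g * z * g⁻¹ = z := congrArg Subtype.val happ
    calc g * z = g * z * g⁻¹ * g := by group
      _ = z * g := by rw [this]
  exact ⟨1, ⟨z, hle hzZS⟩, by intro h; exact hzne' (by simpa using congrArg Subtype.val h.symm)⟩

end Part1

section Part2

lemma center_nontrivial_of_nilpotent {H : Type*} [Group H] [Nontrivial H]
    (h : Group.IsNilpotent H) : Nontrivial (Subgroup.center H) := by
  by_contra hc
  have hcb : Subgroup.center H = ⊥ := by
    rcases Subgroup.bot_or_nontrivial (Subgroup.center H) with h' | h'
    · exact h'
    · exact absurd h' hc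
  have hall : ∀ m : ℕ, Subgroup.upperCentralSeries H m = ⊥ := by
    intro m
    induction m with
    | zero => exact Subgroup.upperCentralSeries_zero H
    | succ m ih =>
      ext x
      rw [Subgroup.mem_upperCentralSeries_succ_iff]
      simp only [ih, Subgroup.mem_bot]
      constructor
      · intro hx
        have : x ∈ Subgroup.center H := by
          rw [Subgroup.mem_center_iff]
          intro y
          have := hx y
          have hxy : x * y * x⁻¹ * y⁻¹ = 1 := this
          calc y * x = (x * y * x⁻¹ * y⁻¹) * (y * x) := by rw [hxy]; group
            _ = x * y := by group
        rw [hcb] at this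
        exact Subgroup.mem_bot.mp this
      · rintro rfl
        intro y
        group
    
  obtain ⟨m, hm⟩ := Group.IsNilpotent.nilpotent' (G := H)
  rw [hall m] at hm
  obtain ⟨x, y, hxy⟩ := exists_pair_ne H
  apply hxy
  have hx : x ∈ (⊥ : Subgroup H) := hm ▸ Subgroup.mem_top x
  have hy : y ∈ (⊥ : Subgroup H) := hm ▸ Subgroup.mem_top y
  rw [Subgroup.mem_bot.mp hx, Subgroup.mem_bot.mp hy]

-- normality of N ⊓ centralizer N
lemma inf_centralizer_normal {G : Type*} [Group G] (N : Subgroup G) (hN : N.Normal) :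
    (N ⊓ Subgroup.centralizer (N : Set G)).Normal := by
  constructor
  rintro z ⟨hz1, hz2⟩ g
  have hz2' : z ∈ Subgroup.centralizer (N : Set G) := hz2
  constructor
  · exact hN.conj_mem z hz1 g
  · show g * z * g⁻¹ ∈ Subgroup.centralizer (N : Set G)
    rw [Subgroup.mem_centralizer_iff]
    intro s hs
    rw [Subgroup.mem_centralizer_iff] at hz2'
    have hs' : g⁻¹ * s * g ∈ N := by
      have := hN.conj_mem s hs g⁻¹
      simpa using this
    have hcomm := hz2' _ hs'
    have : g * ((g⁻¹ * s * g) * z) * g⁻¹ = g * (z * (g⁻¹ * s * g)) * g⁻¹ := by rw [hcomm]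
    calc s * (g * z * g⁻¹) = g * ((g⁻¹ * s * g) * z) * g⁻¹ := by group
      _ = g * (z * (g⁻¹ * s * g)) * g⁻¹ := this
      _ = g * z * g⁻¹ * s := by group

end Part2

section Part3

variable {G : Type} [Group G] [Finite G]

lemma smul_top' (a : MulAut G) : a • (⊤ : Subgroup G) = ⊤ := by
  refine le_antisymm le_top ?_
  rw [Subgroup.subset_pointwise_smul_iff]
  exact le_top

lemma isCoatom_smul (a : MulAut G) {M : Subgroup G} (h : IsCoatom M) : IsCoatom (a • M) := by
  constructor
  · intro h'
    apply h.1
    have := congrArg (fun K => a⁻¹ • K) h'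
    simpa [smul_top'] using this
  · intro b hb
    have h1 : M < a⁻¹ • b := by
      constructor
      · rw [← inv_smul_smul a M]
        exact Subgroup.pointwise_smul_le_pointwise_smul_iff.mpr hb.le
      · intro hle
        have : a • (a⁻¹ • b) ≤ a • M :=
          Subgroup.pointwise_smul_le_pointwise_smul_iff.mpr hle
        rw [smul_inv_smul] at this
        exact hb.not_ge this
    have := h.2 _ h1
    have := congrArg (fun K => a • K) this
    simpa [smul_top'] using this

lemma card_smul (a : MulAut G) (M : Subgroup G) : Nat.card (a • M : Subgroup G) = Nat.card M :=
  (Nat.card_congr (Subgroup.equivSMul a M).toEquiv).symm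

-- step A packaged as induction
lemma stepA (hsimple : ∀ N : Subgroup G, N.Normal → N = ⊥ ∨ N = ⊤)
    (hproper : ∀ H : Subgroup G, H ≠ ⊤ → Group.IsNilpotent ↥H) :
    ∀ d : ℕ, ∀ M1 M2 : Subgroup G, IsCoatom M1 → IsCoatom M2 → M1 ≠ M2 →
      Nat.card G ≤ Nat.card ↥(M1 ⊓ M2) + d → M1 ⊓ M2 = ⊥ := by
  intro d
  induction d with
  | zero =>
    intro M1 M2 h1 h2 hne hcard
    exfalso
    have hle : Nat.card ↥(M1 ⊓ M2) ≤ Nat.card G := Subgroup.card_le_card_group _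
    have : Nat.card ↥(M1 ⊓ M2) = Nat.card G := by omega
    have htop : M1 ⊓ M2 = ⊤ := Subgroup.eq_top_of_card_eq _ this
    exact h1.1 (top_le_iff.mp (htop ▸ inf_le_left))
  | succ d ih =>
    intro M1 M2 h1 h2 hne hcard
    by_contra hbot
    set I := M1 ⊓ M2 with hI
    -- I < M1 and I < M2
    have hIM1 : I < M1 := by
      rcases lt_or_eq_of_le (inf_le_left : I ≤ M1) with h | h
      · exact h
      · exfalso
        have : M1 ≤ M2 := by rw [← h]; exact inf_le_right
        rcases lt_or_eq_of_le this with h' | h'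
        · exact h2.1 (h1.2 _ h')
        · exact hne h'
    have hIM2 : I < M2 := by
      rcases lt_or_eq_of_le (inf_le_right : I ≤ M2) with h | h
      · exact h
      · exfalso
        have : M2 ≤ M1 := by rw [← h]; exact inf_le_left
        rcases lt_or_eq_of_le this with h' | h'
        · exact h1.1 (h2.2 _ h')
        · exact hne h'.symm
    -- normalizer growth: find x in M \ I normalizing I, for each of M1 M2
    have key : ∀ M : Subgroup G, IsCoatom M → I < M →
        ∃ x : G, x ∈ M ∧ x ∉ I ∧ x ∈ (Subgroup.normalizer (I : Set G)) := by
      intro M hM hIM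
      haveI hnil := hproper M hM.1
      have hnc := @normalizerCondition_of_isNilpotent ↥M _ hnil
      have hItop : I.subgroupOf M ≠ ⊤ := by
        rw [Ne, Subgroup.subgroupOf_eq_top]
        exact fun h => hIM.not_ge h
      have hlt := hnc _ (lt_top_iff_ne_top.mpr hItop)
      obtain ⟨x, hxn, hxi⟩ := SetLike.exists_of_lt hlt
      refine ⟨(x : G), x.2, ?_, ?_⟩
      · intro h
        exact hxi (Subgroup.mem_subgroupOf.mpr h)
      · rw [Subgroup.mem_normalizer_iff]
        intro y
        constructor
        · intro hy
          have hyM : y ∈ M := hIM.le hy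
          have := (Subgroup.mem_normalizer_iff.mp hxn ⟨y, hyM⟩).mp
            (Subgroup.mem_subgroupOf.mpr hy)
          exact Subgroup.mem_subgroupOf.mp this
        · intro hy
          have hyM : y ∈ M := by
            have hxyM : (x : G) * y * (x : G)⁻¹ ∈ M := hIM.le hy
            have : (x:G)⁻¹ * ((x:G) * y * (x:G)⁻¹) * (x:G) ∈ M :=
              M.mul_mem (M.mul_mem (M.inv_mem x.2) hxyM) x.2
            simpa [mul_assoc] using this
          have := (Subgroup.mem_normalizer_iff.mp hxn ⟨y, hyM⟩).mpr
            (Subgroup.mem_subgroupOf.mpr (by simpa using hy))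
          exact Subgroup.mem_subgroupOf.mp this
    obtain ⟨x1, hx1M, hx1I, hx1N⟩ := key M1 h1 hIM1
    obtain ⟨x2, hx2M, hx2I, hx2N⟩ := key M2 h2 hIM2
    -- normalizer is proper
    have hNtop : (Subgroup.normalizer (I : Set G)) ≠ ⊤ := by
      intro h
      haveI : I.Normal := Subgroup.normalizer_eq_top_iff.mp h
      rcases hsimple I ‹I.Normal› with h' | h'
      · exact hbot h'
      · exact h1.1 (top_le_iff.mp (h' ▸ inf_le_left))
    -- coatom above normalizer
    rcases (IsCoatomic.eq_top_or_exists_le_coatom (α := Subgroup G) (Subgroup.normalizer (I : Set G))) with h | h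
    · exact hNtop h
    obtain ⟨M3, hM3, hNM3⟩ := h
    by_cases hM31 : M3 = M1
    · -- x2 ∈ N ≤ M3 = M1, and x2 ∈ M2, so x2 ∈ I
      apply hx2I
      exact ⟨hM31 ▸ hNM3 hx2N, hx2M⟩
    · -- M3 ≠ M1 : intersection strictly bigger than I
      have hlt : I < M3 ⊓ M1 := by
        constructor
        · exact le_inf (le_trans Subgroup.le_normalizer hNM3) inf_le_left
        · intro hle
          exact hx1I (hle ⟨hNM3 hx1N, hx1M⟩)
      have hcardlt : Nat.card ↥I < Nat.card ↥(M3 ⊓ M1) := by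
        rcases lt_or_eq_of_le (Subgroup.card_le_of_le hlt.le) with h | h
        · exact h
        · exfalso
          exact hlt.ne (Subgroup.eq_of_le_of_card_ge hlt.le (le_of_eq h.symm))
      have := ih M3 M1 hM3 h1 hM31 (by omega)
      rw [this] at hlt
      exact hbot (le_bot_iff.mp hlt.le)

lemma schmidt (hsimple : ∀ N : Subgroup G, N.Normal → N = ⊥ ∨ N = ⊤)
    (hproper : ∀ H : Subgroup G, H ≠ ⊤ → Group.IsNilpotent ↥H) : Group.IsNilpotent G := by
  classical
  by_contra hnn
  -- G is nontrivial
  rcases subsingleton_or_nontrivial G with hsub | hnt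
  · exact hnn Group.isNilpotent_of_subsingleton
  -- G is not cyclic
  have hncyc : ¬ IsCyclic G := by
    intro h
    letI := h.commGroup
    exact hnn CommGroup.isNilpotent
  haveI : Fintype G := Fintype.ofFinite G
  set n := Nat.card G with hn
  have hn2 : 2 ≤ n := Finite.one_lt_card
  -- all distinct coatoms intersect trivially
  have hA : ∀ M1 M2 : Subgroup G, IsCoatom M1 → IsCoatom M2 → M1 ≠ M2 → M1 ⊓ M2 = ⊥ := by
    intro M1 M2 h1 h2 hne
    exact stepA hsimple hproper n M1 M2 h1 h2 hne (by omega)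
  -- every nonidentity element is in a coatom
  have hcover : ∀ x : G, x ≠ 1 → ∃ M : Subgroup G, IsCoatom M ∧ x ∈ M := by
    intro x hx
    have hzx : Subgroup.zpowers x ≠ ⊤ := by
      intro h
      exact hncyc ⟨⟨x, fun y => by rw [← Subgroup.mem_zpowers_iff, h]; exact Subgroup.mem_top y⟩⟩
    rcases (IsCoatomic.eq_top_or_exists_le_coatom (α := Subgroup G) (Subgroup.zpowers x))
      with h | h
    · exact absurd h hzx
    obtain ⟨M, hM, hle⟩ := h
    exact ⟨M, hM, hle (Subgroup.mem_zpowers x)⟩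
  -- coatoms are nontrivial
  have hcoatom_ne_bot : ∀ M : Subgroup G, IsCoatom M → M ≠ ⊥ := by
    intro M hM h
    obtain ⟨x, hx⟩ := exists_ne (1 : G)
    have hzx : Subgroup.zpowers x ≠ ⊤ := by
      intro h'
      exact hncyc ⟨⟨x, fun y => by rw [← Subgroup.mem_zpowers_iff, h']; exact Subgroup.mem_top y⟩⟩
    have : (⊥ : Subgroup G) < Subgroup.zpowers x := by
      rw [bot_lt_iff_ne_bot, Ne, Subgroup.zpowers_eq_bot]
      exact hx
    rw [← h] at this
    exact hzx (hM.2 _ this)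
  -- there exists a coatom
  have hex : ∃ M : Subgroup G, IsCoatom M := by
    obtain ⟨x, hx⟩ := exists_ne (1 : G)
    obtain ⟨M, hM, _⟩ := hcover x hx
    exact ⟨M, hM⟩
  obtain ⟨M, hM⟩ := hex
  -- normalizer of a coatom is itself
  have hnorm : ∀ K : Subgroup G, IsCoatom K → (Subgroup.normalizer (K : Set G)) = K := by
    intro K hK
    rcases lt_or_eq_of_le (Subgroup.le_normalizer (H := K)) with h | h
    · exfalso
      have htop := hK.2 _ h
      haveI : K.Normal := Subgroup.normalizer_eq_top_iff.mp htop
      rcases hsimple K ‹K.Normal› with h' | h'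
      · exact hcoatom_ne_bot K hK h'
      · exact hK.1 h'
    · exact h.symm
  -- membership in a conjugate
  have hmem_conj : ∀ (K : Subgroup G) (g x : G), x ∈ MulAut.conj g • K ↔ g⁻¹ * x * g ∈ K := by
    intro K g x
    rw [Subgroup.mem_pointwise_smul_iff_inv_smul_mem]
    show (MulAut.conj g)⁻¹ x ∈ K ↔ _
    rw [MulAut.conj_inv_apply]
  -- conjugate of K by m ∈ K is K
  have hconjmem : ∀ (K : Subgroup G) (m : G), m ∈ K → MulAut.conj m • K = K := by
    intro K m hm
    ext x
    rw [hmem_conj]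
    constructor
    · intro h
      have := K.mul_mem (K.mul_mem hm h) (K.inv_mem hm)
      simpa [mul_assoc] using this
    · intro h
      exact K.mul_mem (K.mul_mem (K.inv_mem hm) h) hm
  -- the family of conjugates of a coatom
  have build : ∀ K : Subgroup G, IsCoatom K → ∃ CK : Finset (Subgroup G),
      (∀ L ∈ CK, ∃ g : G, L = MulAut.conj g • K) ∧
      (∀ g : G, MulAut.conj g • K ∈ CK) ∧ CK.card = K.index := by
    intro K hK
    let f : G ⧸ K → Subgroup G := fun z => Quotient.liftOn' z (fun g => MulAut.conj g • K)
      (by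
        intro a b hab
        rw [QuotientGroup.leftRel_apply] at hab
        show MulAut.conj a • K = MulAut.conj b • K
        have hb : b = a * (a⁻¹ * b) := by group
        rw [hb, map_mul, mul_smul, hconjmem K _ hab])
    have hf : ∀ g : G, f (QuotientGroup.mk g) = MulAut.conj g • K := fun g => rfl
    have hinj : Function.Injective f := by
      intro a b
      induction a using QuotientGroup.induction_on
      induction b using QuotientGroup.induction_on
      rename_i a b
      intro h
      rw [hf, hf] at h
      rw [QuotientGroup.eq]
      have hnK : b⁻¹ * a ∈ (Subgroup.normalizer (K : Set G)) := by
        rw [Subgroup.mem_normalizer_iff]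
        intro y
        constructor
        · intro hy
          have h1 : a * y * a⁻¹ ∈ MulAut.conj a • K := by
            rw [hmem_conj]
            simpa [mul_assoc] using hy
          rw [h] at h1
          rw [hmem_conj] at h1
          have : b⁻¹ * a * y * (b⁻¹ * a)⁻¹ = b⁻¹ * (a * y * a⁻¹) * b := by group
          rw [this]
          exact h1
        · intro hy
          have h1 : b * ((b⁻¹ * a) * y * (b⁻¹ * a)⁻¹) * b⁻¹ ∈ MulAut.conj b • K := by
            rw [hmem_conj]
            simpa [mul_assoc] using hy
          rw [← h] at h1
          rw [hmem_conj] at h1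
          have heq : a⁻¹ * (b * (b⁻¹ * a * y * (b⁻¹ * a)⁻¹) * b⁻¹) * a = y := by group
          rwa [heq] at h1
      rw [hnorm K hK] at hnK
      have : (b⁻¹ * a)⁻¹ ∈ K := K.inv_mem hnK
      simpa using this
    refine ⟨Finset.image f Finset.univ, ?_, ?_, ?_⟩
    · intro L hL
      rw [Finset.mem_image] at hL
      obtain ⟨z, _, hz⟩ := hL
      obtain ⟨g, rfl⟩ := QuotientGroup.mk_surjective z
      exact ⟨g, by rw [← hz, hf]⟩
    · intro g
      rw [Finset.mem_image]
      exact ⟨QuotientGroup.mk g, Finset.mem_univ _, rfl⟩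
    · rw [Finset.card_image_of_injective _ hinj, Subgroup.index_eq_card,
        Nat.card_eq_fintype_card, Finset.card_univ]
  -- the pointed finset of a subgroup
  let FS : Subgroup G → Finset G := fun K => (Finset.univ.filter (fun x => x ∈ K)).erase 1
  have hFS_card : ∀ K : Subgroup G, (FS K).card + 1 = Nat.card K := by
    intro K
    have h1 : (1 : G) ∈ Finset.univ.filter (fun x => x ∈ K) := by
      simp [K.one_mem]
    have := Finset.card_erase_add_one h1
    rw [this]
    rw [Nat.card_eq_fintype_card, Fintype.card_subtype]
  have hFS_mem : ∀ (K : Subgroup G) (x : G), x ∈ FS K ↔ x ∈ K ∧ x ≠ 1 := by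
    intro K x
    simp [FS, and_comm]
  -- the union of pointed conjugates
  have hUnion : ∀ K : Subgroup G, IsCoatom K → ∀ CK : Finset (Subgroup G),
      (∀ L ∈ CK, ∃ g : G, L = MulAut.conj g • K) → CK.card = K.index →
      ∃ U : Finset G, (∀ x ∈ U, x ≠ 1) ∧
        (∀ L ∈ CK, ∀ x ∈ L, x ≠ 1 → x ∈ U) ∧
        (∀ x ∈ U, ∃ L ∈ CK, x ∈ L) ∧
        U.card + K.index = n := by
    intro K hK CK hCK hCKcard
    -- all members of CK are coatoms with card equal to card K
    have hco : ∀ L ∈ CK, IsCoatom L := by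
      intro L hL
      obtain ⟨g, rfl⟩ := hCK L hL
      exact isCoatom_smul _ hK
    have hcard : ∀ L ∈ CK, Nat.card L = Nat.card K := by
      intro L hL
      obtain ⟨g, rfl⟩ := hCK L hL
      exact card_smul _ _
    have hdisj : ∀ L1 ∈ CK, ∀ L2 ∈ CK, L1 ≠ L2 → Disjoint (FS L1) (FS L2) := by
      intro L1 h1 L2 h2 hne
      rw [Finset.disjoint_left]
      intro x hx1 hx2
      rw [hFS_mem] at hx1 hx2
      have : x ∈ L1 ⊓ L2 := ⟨hx1.1, hx2.1⟩
      rw [hA L1 L2 (hco _ h1) (hco _ h2) hne] at this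
      exact hx1.2 (Subgroup.mem_bot.mp this)
    refine ⟨CK.biUnion FS, ?_, ?_, ?_, ?_⟩
    · intro x hx
      rw [Finset.mem_biUnion] at hx
      obtain ⟨L, _, hxL⟩ := hx
      exact ((hFS_mem L x).mp hxL).2
    · intro L hL x hxL hx1
      rw [Finset.mem_biUnion]
      exact ⟨L, hL, (hFS_mem L x).mpr ⟨hxL, hx1⟩⟩
    · intro x hx
      rw [Finset.mem_biUnion] at hx
      obtain ⟨L, hL, hxL⟩ := hx
      exact ⟨L, hL, ((hFS_mem L x).mp hxL).1⟩
    · rw [Finset.card_biUnion hdisj]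
      have : ∀ L ∈ CK, (FS L).card = Nat.card K - 1 := by
        intro L hL
        have := hFS_card L
        have h2 := hcard L hL
        omega
      rw [Finset.sum_congr rfl this, Finset.sum_const, smul_eq_mul, hCKcard]
      -- K.index * (card K - 1) + K.index = n
      have hmul : Nat.card K * K.index = n := Subgroup.card_mul_index K
      have hK2 : 2 ≤ Nat.card K :=
        (Subgroup.one_lt_card_iff_ne_bot K).mpr (hcoatom_ne_bot K hK)
      have : K.index * (Nat.card K - 1) + K.index = K.index * Nat.card K := by
        rw [← Nat.mul_succ]
        congr 1
        omega
      rw [this, mul_comm]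
      exact hmul
  -- index bounds for coatoms
  have hidx : ∀ K : Subgroup G, IsCoatom K → 2 ≤ K.index ∧ 2 * K.index ≤ n := by
    intro K hK
    have hmul : Nat.card K * K.index = n := Subgroup.card_mul_index K
    have hK2 : 2 ≤ Nat.card K :=
      (Subgroup.one_lt_card_iff_ne_bot K).mpr (hcoatom_ne_bot K hK)
    have hne0 : K.index ≠ 0 := Subgroup.index_ne_zero_of_finite
    have hne1 : K.index ≠ 1 := by
      intro h
      exact hK.1 (Subgroup.index_eq_one.mp h)
    constructor
    · omega
    · calc 2 * K.index ≤ Nat.card K * K.index := Nat.mul_le_mul_right _ hK2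
        _ = n := hmul
  obtain ⟨CM, hCM1, hCM2, hCM3⟩ := build M hM
  obtain ⟨UM, hU1, hU2, hU3, hU4⟩ := hUnion M hM CM hCM1 hCM3
  by_cases hall : ∀ K : Subgroup G, IsCoatom K → K ∈ CM
  · -- every nonidentity element is in UM
    have hsub : Finset.univ.erase (1 : G) ⊆ UM := by
      intro x hx
      rw [Finset.mem_erase] at hx
      obtain ⟨K, hK, hxK⟩ := hcover x hx.1
      exact hU2 K (hall K hK) x hxK hx.1
    have hcard_le : n - 1 ≤ UM.card := by
      have := Finset.card_le_card hsub
      rw [Finset.card_erase_of_mem (Finset.mem_univ 1), Finset.card_univ,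
        ← Nat.card_eq_fintype_card] at this
      omega
    have := (hidx M hM).1
    omega
  · push_neg at hall
    obtain ⟨M', hM', hM'CM⟩ := hall
    obtain ⟨CM', hCM'1, hCM'2, hCM'3⟩ := build M' hM'
    obtain ⟨UM', hU'1, hU'2, hU'3, hU'4⟩ := hUnion M' hM' CM' hCM'1 hCM'3
    -- the families are disjoint
    have hfam : ∀ L, L ∈ CM → L ∈ CM' → False := by
      intro L hL hL'
      obtain ⟨g, rfl⟩ := hCM1 L hL
      obtain ⟨g', hg'⟩ := hCM'1 _ hL'
      apply hM'CM
      have : M' = MulAut.conj (g'⁻¹ * g) • M := by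
        rw [map_mul, mul_smul, hg', map_inv, inv_smul_smul]
      rw [this]
      exact hCM2 _
    have hUdisj : Disjoint UM UM' := by
      rw [Finset.disjoint_left]
      intro x hx hx'
      obtain ⟨L, hL, hxL⟩ := hU3 x hx
      obtain ⟨L', hL', hxL'⟩ := hU'3 x hx'
      have hne : L ≠ L' := fun h => hfam L hL (h ▸ hL')
      have hco : IsCoatom L := by
        obtain ⟨g, rfl⟩ := hCM1 L hL
        exact isCoatom_smul _ hM
      have hco' : IsCoatom L' := by
        obtain ⟨g, rfl⟩ := hCM'1 L' hL'
        exact isCoatom_smul _ hM'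
      have : x ∈ L ⊓ L' := ⟨hxL, hxL'⟩
      rw [hA L L' hco hco' hne] at this
      exact hU1 x hx (Subgroup.mem_bot.mp this)
    have hsub : UM ∪ UM' ⊆ Finset.univ.erase (1 : G) := by
      intro x hx
      rw [Finset.mem_union] at hx
      rw [Finset.mem_erase]
      rcases hx with hx | hx
      · exact ⟨hU1 x hx, Finset.mem_univ x⟩
      · exact ⟨hU'1 x hx, Finset.mem_univ x⟩
    have hcard := Finset.card_le_card hsub
    rw [Finset.card_union_of_disjoint hUdisj, Finset.card_erase_of_mem (Finset.mem_univ 1),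
      Finset.card_univ, ← Nat.card_eq_fintype_card] at hcard
    have h1 := (hidx M hM).2
    have h2 := (hidx M' hM').2
    omega

end Part3

section Part4

lemma backward (n : ℕ) : 0 < n →
    (∀ p ∈ n.primeFactors, ∀ q ∈ n.primeFactors,
        ∀ k : ℕ, 1 ≤ k → k ≤ n.factorization p → ¬ (p ^ k ≡ 1 [MOD q])) →
    ∀ (G : Type) [Group G], Nat.card G = n → Group.IsNilpotent G := by
  induction n using Nat.strong_induction_on with
  | _ n ih =>
  intro hn hcond G _ hcard
  haveI hfin : Finite G := Nat.finite_of_card_ne_zero (by omega)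
  -- induction wrapper
  have IH : ∀ (H : Type) [Group H], Nat.card H ∣ n → Nat.card H < n → Group.IsNilpotent H := by
    intro H _ hdvd hlt
    have hpos : 0 < Nat.card H := by
      rcases Nat.eq_zero_or_pos (Nat.card H) with h | h
      · rw [h] at hdvd; omega
      · exact h
    refine ih _ hlt hpos ?_ H rfl
    intro p hp q hq k hk1 hk2
    have hsub := Nat.primeFactors_mono hdvd (by omega)
    refine hcond p (hsub hp) q (hsub hq) k hk1 ?_
    have hle : (Nat.card H).factorization ≤ n.factorization :=
      (Nat.factorization_le_iff_dvd (by omega) (by omega)).mpr hdvd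
    exact le_trans hk2 (hle p)
  by_cases hNex : ∃ N : Subgroup G, N.Normal ∧ N ≠ ⊥ ∧ N ≠ ⊤
  · obtain ⟨N, hNnorm, hNbot, hNtop⟩ := hNex
    -- basic card facts for proper subgroups
    have hproper_card : ∀ K : Subgroup G, K ≠ ⊤ → Nat.card K ∣ n ∧ Nat.card K < n := by
      intro K hK
      have hdvd : Nat.card K ∣ n := hcard ▸ Subgroup.card_subgroup_dvd_card K
      have hmul : Nat.card K * K.index = n := hcard ▸ Subgroup.card_mul_index K
      have h0 : K.index ≠ 0 := Subgroup.index_ne_zero_of_finite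
      have h1 : K.index ≠ 1 := fun h => hK (Subgroup.index_eq_one.mp h)
      have hc1 : 1 ≤ Nat.card K := Nat.card_pos
      have h2 : 2 * Nat.card K ≤ n := by
        calc 2 * Nat.card K ≤ K.index * Nat.card K := Nat.mul_le_mul_right _ (by omega)
          _ = n := by rw [mul_comm]; exact hmul
      exact ⟨hdvd, by omega⟩
    obtain ⟨hNdvd, hNlt⟩ := hproper_card N hNtop
    haveI hNnil : Group.IsNilpotent ↥N := IH ↥N hNdvd hNlt
    haveI hNnontriv : Nontrivial ↥N := Subgroup.nontrivial_iff_ne_bot N |>.mpr hNbot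
    haveI := center_nontrivial_of_nilpotent hNnil
    -- ZN = N ⊓ centralizer N is a nontrivial normal subgroup with pairwise commuting elements
    set ZN : Subgroup G := N ⊓ Subgroup.centralizer (N : Set G) with hZNdef
    haveI hZNnorm : ZN.Normal := inf_centralizer_normal N hNnorm
    have hZNnontriv : Nontrivial ↥ZN := by
      obtain ⟨⟨z, hzc⟩, hzne⟩ := exists_ne (1 : Subgroup.center ↥N)
      refine ⟨⟨(z : G), ?_⟩, 1, ?_⟩
      · constructor
        · exact z.2
        · show (z : G) ∈ Subgroup.centralizer (N : Set G)
          rw [Subgroup.mem_centralizer_iff]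
          intro s hs
          exact congrArg Subtype.val ((Subgroup.mem_center_iff.mp hzc) ⟨s, hs⟩)
      · intro h
        apply hzne
        have : (z : G) = 1 := by simpa using congrArg Subtype.val h
        ext
        simpa using this
    have hZNcomm : ∀ x y : G, x ∈ ZN → y ∈ ZN → x * y = y * x := by
      intro x y hx hy
      have hy2 : y ∈ Subgroup.centralizer (N : Set G) := hy.2
      rw [Subgroup.mem_centralizer_iff] at hy2
      exact hy2 x hx.1
    -- the prime q
    have hZN2 : 2 ≤ Nat.card ZN := Finite.one_lt_card
    set q := (Nat.card ZN).minFac with hqdef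
    have hq : q.Prime := Nat.minFac_prime (by omega)
    haveI : Fact q.Prime := ⟨hq⟩
    -- element of order q in ZN
    obtain ⟨w, hw⟩ := exists_prime_orderOf_dvd_card' (G := ↥ZN) q (Nat.minFac_dvd _)
    -- Q0 : the q-torsion subgroup of ZN
    set E := q ^ n with hEdef
    have hmulpow : ∀ x y : G, x * y = y * x → ∀ m : ℕ, (x * y) ^ m = x ^ m * y ^ m := by
      intro x y h m
      exact Commute.mul_pow h m
    set Q0 : Subgroup G :=
      { carrier := {x | x ∈ ZN ∧ x ^ E = 1}
        one_mem' := ⟨ZN.one_mem, one_pow E⟩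
        mul_mem' := by
          rintro a b ⟨ha1, ha2⟩ ⟨hb1, hb2⟩
          refine ⟨ZN.mul_mem ha1 hb1, ?_⟩
          rw [hmulpow a b (hZNcomm a b ha1 hb1) E, ha2, hb2, one_mul]
        inv_mem' := by
          rintro a ⟨ha1, ha2⟩
          refine ⟨ZN.inv_mem ha1, ?_⟩
          rw [inv_pow, ha2, inv_one] } with hQ0def
    have hQ0mem : ∀ x : G, x ∈ Q0 ↔ x ∈ ZN ∧ x ^ E = 1 := fun x => Iff.rfl
    haveI hQ0norm : Q0.Normal := by
      constructor
      intro x hx g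
      rw [hQ0mem] at hx ⊢
      refine ⟨hZNnorm.conj_mem x hx.1 g, ?_⟩
      have h1 : (MulAut.conj g) x ^ E = 1 := by rw [← map_pow, hx.2, map_one]
      simpa [MulAut.conj_apply] using h1
    have hQ0bot : Q0 ≠ ⊥ := by
      intro h
      have hwZ : (w : G) ∈ Q0 := by
        rw [hQ0mem]
        refine ⟨w.2, ?_⟩
        have : orderOf (w : G) = q := by rw [← hw]; exact orderOf_coe w
        rw [← orderOf_dvd_iff_pow_eq_one, this, hEdef]
        exact dvd_pow_self q (by omega)
      rw [h, Subgroup.mem_bot] at hwZ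
      have : orderOf (w : G) = q := by rw [← hw]; exact orderOf_coe w
      rw [hwZ, orderOf_one] at this
      exact hq.one_lt.ne this
    have hQ0p : IsPGroup q Q0 := by
      intro x
      refine ⟨n, ?_⟩
      have hx2 : (x : G) ^ E = 1 := x.2.2
      ext
      rw [hEdef] at hx2
      simpa using hx2
    -- Q0 is proper (it is contained in N which is proper)
    have hQ0top : Q0 ≠ ⊤ := by
      intro h
      apply hNtop
      rw [eq_top_iff]
      intro x _
      have : x ∈ Q0 := h ▸ Subgroup.mem_top x
      exact this.1.1
    obtain ⟨hQ0dvd, hQ0lt⟩ := hproper_card Q0 hQ0top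
    -- the quotient by Q0 is nilpotent
    have hquotcard : Nat.card (G ⧸ Q0) * Nat.card Q0 = n :=
      hcard ▸ (Subgroup.card_eq_card_quotient_mul_card_subgroup Q0).symm
    have hQ02 : 2 ≤ Nat.card Q0 := (Subgroup.one_lt_card_iff_ne_bot Q0).mpr hQ0bot
    have hquotdvd : Nat.card (G ⧸ Q0) ∣ n := Dvd.intro _ hquotcard
    have hquotlt : Nat.card (G ⧸ Q0) < n := by
      have hpos : 0 < Nat.card (G ⧸ Q0) := Nat.card_pos
      nlinarith
    haveI hquotnil : Group.IsNilpotent (G ⧸ Q0) := IH (G ⧸ Q0) hquotdvd hquotlt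
    -- the Sylow q-subgroup upstairs
    obtain ⟨Pbar⟩ : Nonempty (Sylow q (G ⧸ Q0)) := inferInstance
    haveI hPbarnorm : (Pbar : Subgroup (G ⧸ Q0)).Normal := by
      have key : Group.IsNilpotent (G ⧸ Q0) ↔
          ∀ (p : ℕ) (_hp : Fact p.Prime) (P : Sylow p (G ⧸ Q0)), (↑P : Subgroup (G ⧸ Q0)).Normal :=
        (isNilpotent_of_finite_tfae (G := G ⧸ Q0)).out 0 3
      exact key.mp hquotnil q ⟨hq⟩ Pbar
    set S : Subgroup G := Subgroup.comap (QuotientGroup.mk' Q0) (Pbar : Subgroup (G ⧸ Q0))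
      with hSdef
    haveI hSnorm : S.Normal := hPbarnorm.comap _
    have hQ0S : Q0 ≤ S := by
      intro x hx
      show QuotientGroup.mk' Q0 x ∈ (Pbar : Subgroup (G ⧸ Q0))
      have : QuotientGroup.mk' Q0 x = 1 := by
        rw [← MonoidHom.mem_ker, QuotientGroup.ker_mk']
        exact hx
      rw [this]
      exact Subgroup.one_mem _
    have hSbot : S ≠ ⊥ := by
      intro h
      rw [h] at hQ0S
      exact hQ0bot (le_bot_iff.mp hQ0S)
    -- index of S equals index of Pbar
    have hSindex : S.index = (Pbar : Subgroup (G ⧸ Q0)).index :=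
      Subgroup.index_comap_of_surjective _ (QuotientGroup.mk'_surjective Q0)
    have hSnotdvd : ¬ q ∣ S.index := by
      rw [hSindex]
      exact Pbar.not_dvd_index
    -- S is a q-group
    obtain ⟨b, hb⟩ := (IsPGroup.iff_card (p := q) (G := ↥(Pbar : Subgroup (G ⧸ Q0)))).mp Pbar.2
    obtain ⟨c0, hc0⟩ := (IsPGroup.iff_card (p := q) (G := ↥Q0)).mp hQ0p
    have hScard : Nat.card S = q ^ (b + c0) := by
      have h1 : Nat.card S * S.index = n := hcard ▸ Subgroup.card_mul_index S
      have h2 : Nat.card (Pbar : Subgroup (G ⧸ Q0)) * (Pbar : Subgroup (G ⧸ Q0)).index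
          = Nat.card (G ⧸ Q0) := Subgroup.card_mul_index _
      have hidx0 : 0 < S.index := Nat.pos_of_ne_zero Subgroup.index_ne_zero_of_finite
      have h3 : Nat.card S * S.index
          = (Nat.card (Pbar : Subgroup (G ⧸ Q0)) * Nat.card Q0) * S.index := by
        rw [h1]
        calc n = Nat.card (G ⧸ Q0) * Nat.card Q0 := hquotcard.symm
          _ = (Nat.card (Pbar : Subgroup (G ⧸ Q0)) * (Pbar : Subgroup (G ⧸ Q0)).index)
              * Nat.card Q0 := by rw [h2]
          _ = (Nat.card (Pbar : Subgroup (G ⧸ Q0)) * Nat.card Q0)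
              * (Pbar : Subgroup (G ⧸ Q0)).index := by ring
          _ = (Nat.card (Pbar : Subgroup (G ⧸ Q0)) * Nat.card Q0) * S.index := by rw [hSindex]
      have : Nat.card S = Nat.card (Pbar : Subgroup (G ⧸ Q0)) * Nat.card Q0 :=
        Nat.eq_of_mul_eq_mul_right hidx0 h3
      rw [this, hb, hc0, pow_add]
    have hSp : IsPGroup q S := IsPGroup.of_card hScard
    -- apply the key step
    haveI hcenter : Nontrivial (Subgroup.center G) := by
      refine keyStep hq S hSp hSbot hSnotdvd ?_
      intro r hr hrdvd k hk1 hkdvd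
      rw [hcard] at hrdvd hkdvd
      have hqn : q ∣ n := by
        have : Nat.card ZN ∣ n := hcard ▸ Subgroup.card_subgroup_dvd_card ZN
        exact dvd_trans (Nat.minFac_dvd _) this
      refine hcond q ?_ r ?_ k hk1 ?_
      · exact Nat.mem_primeFactors.mpr ⟨hq, hqn, by omega⟩
      · exact Nat.mem_primeFactors.mpr ⟨hr, hrdvd, by omega⟩
      · exact (Nat.Prime.pow_dvd_iff_le_factorization hq (by omega)).mp hkdvd
    -- conclude via the center quotient
    have hcentercard : 2 ≤ Nat.card (Subgroup.center G) := Finite.one_lt_card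
    have hcq : Nat.card (G ⧸ Subgroup.center G) * Nat.card (Subgroup.center G) = n :=
      hcard ▸ (Subgroup.card_eq_card_quotient_mul_card_subgroup _).symm
    have hcqdvd : Nat.card (G ⧸ Subgroup.center G) ∣ n := Dvd.intro _ hcq
    have hcqlt : Nat.card (G ⧸ Subgroup.center G) < n := by
      have hpos : 0 < Nat.card (G ⧸ Subgroup.center G) := Nat.card_pos
      nlinarith
    have := IH (G ⧸ Subgroup.center G) hcqdvd hcqlt
    exact of_quotient_center_nilpotent this
  · -- simple case
    push_neg at hNex
    apply schmidt
    · intro N hN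
      by_cases h : N = ⊥
      · exact Or.inl h
      · exact Or.inr (hNex N hN h)
    · intro H hH
      have hdvd : Nat.card H ∣ n := hcard ▸ Subgroup.card_subgroup_dvd_card H
      have hmul : Nat.card H * H.index = n := hcard ▸ Subgroup.card_mul_index H
      have h0 : H.index ≠ 0 := Subgroup.index_ne_zero_of_finite
      have h1 : H.index ≠ 1 := fun h => hH (Subgroup.index_eq_one.mp h)
      have hc1 : 1 ≤ Nat.card H := Nat.card_pos
      have h2 : 2 * Nat.card H ≤ n := by
        calc 2 * Nat.card H ≤ H.index * Nat.card H := Nat.mul_le_mul_right _ (by omega)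
          _ = n := by rw [mul_comm]; exact hmul
      exact IH ↥H hdvd (by omega)

end Part4

section Part5

lemma forward_construction {p q k : ℕ} (hp : p.Prime) (hq : q.Prime) (hk : 1 ≤ k)
    (hmod : p ^ k ≡ 1 [MOD q]) :
    ∃ (G0 : Type) (_ : Group G0),
      Nat.card G0 = p ^ k * q ∧ ¬ Group.IsNilpotent G0 := by
  classical
  haveI : Fact p.Prime := ⟨hp⟩
  haveI : Fact q.Prime := ⟨hq⟩
  have hpk1 : 1 ≤ p ^ k := Nat.one_le_pow _ _ hp.pos
  have hdvd : q ∣ p ^ k - 1 := (Nat.modEq_iff_dvd' hpk1).mp hmod.symm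
  have hqp : q ≠ p := by
    rintro rfl
    have h1 : q ∣ q ^ k := dvd_pow_self q (by omega)
    have h2 := Nat.dvd_sub h1 hdvd
    rw [Nat.sub_sub_self hpk1] at h2
    have := hq.one_lt
    have := Nat.dvd_one.mp h2
    omega
  -- the field with p^k elements
  set F := GaloisField p k with hFdef
  haveI : Fintype F := Fintype.ofFinite F
  have hcardF : Nat.card F = p ^ k := GaloisField.card p k (by omega)
  -- a unit of order q
  have hcardU : Nat.card Fˣ = p ^ k - 1 := by
    rw [Nat.card_eq_fintype_card, Fintype.card_units, ← Nat.card_eq_fintype_card, hcardF]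
  obtain ⟨u, hu⟩ := exists_prime_orderOf_dvd_card' (G := Fˣ) q (by rw [hcardU]; exact hdvd)
  have hu1 : u ≠ 1 := by
    intro h
    rw [h, orderOf_one] at hu
    exact hq.one_lt.ne hu
  -- the automorphism of (Multiplicative F) given by multiplication by u
  let j : Multiplicative (AddAut F) →* MulAut (Multiplicative F) :=
    { toFun := fun f => AddEquiv.toMultiplicative (Multiplicative.toAdd f)
      map_one' := rfl
      map_mul' := fun f g => rfl }
  have hjinj : Function.Injective j := by
    intro f g h
    apply Multiplicative.toAdd.injective
    ext x
    exact congrArg (fun e : MulAut (Multiplicative F) =>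
      Multiplicative.toAdd (e (Multiplicative.ofAdd x))) h
  let ψ : Fˣ →* MulAut (Multiplicative F) := j.comp (DistribMulAction.toAddAut Fˣ F)
  have hψinj : Function.Injective ψ := by
    intro a b h
    have : ∀ x : F, a • x = b • x := by
      intro x
      exact congrArg (fun e : MulAut (Multiplicative F) =>
        (e (Multiplicative.ofAdd x)).toAdd) h
    have h1 := this 1
    rw [Units.smul_def, Units.smul_def, smul_eq_mul, smul_eq_mul, mul_one, mul_one] at h1
    exact Units.ext h1
  set uA : MulAut (Multiplicative F) := ψ u with huAdef
  have horduA : orderOf uA = q := by rw [← hu]; exact orderOf_injective ψ hψinj u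
  -- the acting group
  set H := Subgroup.zpowers uA with hHdef
  have hcardH : Nat.card H = q := by rw [Nat.card_zpowers, horduA]
  set φ : H →* MulAut (Multiplicative F) := H.subtype with hφdef
  set G0 := SemidirectProduct (Multiplicative F) H φ with hG0def
  refine ⟨G0, inferInstance, ?_, ?_⟩
  · -- cardinality
    have he : G0 ≃ (Multiplicative F) × H :=
      { toFun := fun x => (x.left, x.right)
        invFun := fun x => ⟨x.1, x.2⟩
        left_inv := fun x => rfl
        right_inv := fun x => rfl }
    rw [Nat.card_congr he, Nat.card_prod, hcardH]
    have hMF : Nat.card (Multiplicative F) = p ^ k := hcardF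
    rw [hMF]
  · -- not nilpotent
    intro hnil
    haveI : Finite G0 := by
      have he : G0 ≃ (Multiplicative F) × H :=
        { toFun := fun x => (x.left, x.right)
          invFun := fun x => ⟨x.1, x.2⟩
          left_inv := fun x => rfl
          right_inv := fun x => rfl }
      exact Finite.of_equiv _ he.symm
    -- the Sylow q-subgroup given by inr
    set Q : Subgroup G0 := MonoidHom.range (SemidirectProduct.inr : H →* G0) with hQdef
    have hcardQ : Nat.card Q = q := by
      rw [← hcardH]
      exact (Nat.card_congr (MonoidHom.ofInjective SemidirectProduct.inr_injective).toEquiv).symm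
    have hcardG0 : Nat.card G0 = p ^ k * q := by
      have he : G0 ≃ (Multiplicative F) × H :=
        { toFun := fun x => (x.left, x.right)
          invFun := fun x => ⟨x.1, x.2⟩
          left_inv := fun x => rfl
          right_inv := fun x => rfl }
      rw [Nat.card_congr he, Nat.card_prod, hcardH]
      have hMF : Nat.card (Multiplicative F) = p ^ k := hcardF
      rw [hMF]
    -- q-part of card G0 is q
    have hfact : (Nat.card G0).factorization q = 1 := by
      rw [hcardG0]
      rw [Nat.factorization_mul (by positivity) hq.pos.ne', Nat.factorization_pow,
        hq.factorization]
      simp [Nat.Prime.factorization hp, Finsupp.single_apply, hqp, Ne.symm hqp]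
    have hQcard' : Nat.card Q = q ^ (Nat.card G0).factorization q := by
      rw [hfact, pow_one, hcardQ]
    let QS : Sylow q G0 := Sylow.ofCard Q hQcard'
    haveI hQnorm : (QS : Subgroup G0).Normal := by
      have key : Group.IsNilpotent G0 ↔
          ∀ (r : ℕ) (_hr : Fact r.Prime) (P : Sylow r G0), (↑P : Subgroup G0).Normal :=
        (isNilpotent_of_finite_tfae (G := G0)).out 0 3
      exact key.mp hnil q ⟨hq⟩ QS
    -- conjugate inr ⟨uA⟩ by inl (ofAdd 1) and get a contradiction
    set a : Multiplicative F := Multiplicative.ofAdd (1 : F) with hadef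
    set h0 : H := ⟨uA, Subgroup.mem_zpowers uA⟩ with hh0def
    set y : G0 := SemidirectProduct.inr h0 with hydef
    set x : G0 := SemidirectProduct.inl a with hxdef
    have hyQ : y ∈ (QS : Subgroup G0) := ⟨h0, rfl⟩
    have hconj : x * y * x⁻¹ ∈ (QS : Subgroup G0) := hQnorm.conj_mem y hyQ x
    obtain ⟨h1, hh1⟩ := hconj
    -- compute the left component
    have hleft : (x * y * x⁻¹).left = a * ((φ h0) a)⁻¹ := by
      rw [hxdef, hydef]
      rw [SemidirectProduct.mul_left, SemidirectProduct.mul_left,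
        SemidirectProduct.inv_left]
      have hright : (SemidirectProduct.inl a * SemidirectProduct.inr h0 : G0).right = h0 := by
        rw [SemidirectProduct.mul_right, SemidirectProduct.right_inl,
          SemidirectProduct.right_inr, one_mul]
      rw [hright]
      simp
    have hleft1 : (x * y * x⁻¹).left = 1 := by
      rw [← hh1]
      rfl
    rw [hleft] at hleft1
    have huAa : (φ h0) a = Multiplicative.ofAdd ((u : F) * 1) := rfl
    rw [huAa] at hleft1
    have h2 : (1 : F) + -((u : F) * 1) = 0 := by
      have := congrArg Multiplicative.toAdd hleft1
      simpa [hadef] using this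
    apply hu1
    apply Units.ext
    have h3 : (u : F) = 1 := by
      rw [mul_one] at h2
      have h4 : (1 : F) - (u : F) = 0 := by rw [sub_eq_add_neg]; exact h2
      exact (sub_eq_zero.mp h4).symm
    simpa using h3

end Part5

section Part6

theorem stmt_9 (n : ℕ) (hn : 0 < n) :
    (∀ (G : Type) [Group G], Nat.card G = n → Group.IsNilpotent G) ↔
      ∀ p ∈ n.primeFactors, ∀ q ∈ n.primeFactors,
        ∀ k : ℕ, 1 ≤ k → k ≤ n.factorization p → ¬ (p ^ k ≡ 1 [MOD q]) := by
  constructor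
  · intro Hnil
    by_contra hcon
    push_neg at hcon
    obtain ⟨p, hp, q, hq, k, hk1, hk2, hmod⟩ := hcon
    have hpp : p.Prime := Nat.prime_of_mem_primeFactors hp
    have hqq : q.Prime := Nat.prime_of_mem_primeFactors hq
    have hqn : q ∣ n := Nat.dvd_of_mem_primeFactors hq
    have hpkn : p ^ k ∣ n := (Nat.Prime.pow_dvd_iff_le_factorization hpp (by omega)).mpr hk2
    -- q ≠ p
    have hpk1 : 1 ≤ p ^ k := Nat.one_le_pow _ _ hpp.pos
    have hdvdq : q ∣ p ^ k - 1 := (Nat.modEq_iff_dvd' hpk1).mp hmod.symm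
    have hqp : q ≠ p := by
      rintro rfl
      have h1 : q ∣ q ^ k := dvd_pow_self q (by omega)
      have h2 := Nat.dvd_sub h1 hdvdq
      rw [Nat.sub_sub_self hpk1] at h2
      have := hqq.one_lt
      have := Nat.dvd_one.mp h2
      omega
    have hcop : (p ^ k).Coprime q :=
      Nat.Coprime.pow_left _ ((Nat.coprime_primes hpp hqq).mpr (Ne.symm hqp))
    have hdvdn : p ^ k * q ∣ n := Nat.Coprime.mul_dvd_of_dvd_of_dvd hcop hpkn hqn
    set m := n / (p ^ k * q) with hmdef
    have hm : p ^ k * q * m = n := Nat.mul_div_cancel' hdvdn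
    have hm0 : m ≠ 0 := by
      intro h
      rw [h, mul_zero] at hm
      omega
    obtain ⟨G0, _, hG0card, hG0nn⟩ := forward_construction hpp hqq hk1 hmod
    apply hG0nn
    set G := G0 × Multiplicative (ZMod m) with hGdef
    have hcardG : Nat.card G = n := by
      rw [hGdef, Nat.card_prod, hG0card]
      have : Nat.card (Multiplicative (ZMod m)) = m := Nat.card_zmod m
      rw [this, hm]
    haveI := Hnil G hcardG
    exact nilpotent_of_surjective (MonoidHom.fst G0 (Multiplicative (ZMod m)))
      Prod.fst_surjective
  · intro hcond G _ hcard
    exact backward n hn hcond G hcard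

end Part6
end

section
/- Let G be a finite group and P a Sylow p-subgroup of G such that P is contained in the center of its normalizer N_G(P). Then G has a normal p-complement, i.e., a normal subgroup H with order coprime to p and index equal to the order of P. -/
theorem stmt_10 (G : Type) [Group G] [Finite G] (p : ℕ) [Fact p.Prime]
    (P : Sylow p G)
    (hP : (P : Subgroup G).subgroupOf (Subgroup.normalizer ((P : Subgroup G) : Set G)) ≤
      Subgroup.center (Subgroup.normalizer ((P : Subgroup G) : Set G))) :
    ∃ H : Subgroup G, H.Normal ∧ Nat.Coprime (Nat.card H) p ∧
      H.index = Nat.card (P : Subgroup G) := by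
  have hP' : Subgroup.normalizer ((P : Subgroup G) : Set G) ≤ Subgroup.centralizer (P : Set G) := by
    intro n hn
    rw [Subgroup.mem_centralizer_iff]
    intro g hg
    have h := hP (show (⟨g, Subgroup.le_normalizer hg⟩ :
        Subgroup.normalizer ((P : Subgroup G) : Set G)) ∈
        (P : Subgroup G).subgroupOf (Subgroup.normalizer ((P : Subgroup G) : Set G)) from hg)
    have := (Subgroup.mem_center_iff.mp h ⟨n, hn⟩)
    exact (congrArg Subtype.val this).symm
  have hc := MonoidHom.ker_transferSylow_isComplement' P hP'
  refine ⟨(MonoidHom.transferSylow P hP').ker, inferInstance, ?_, ?_⟩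
  · exact (Nat.coprime_comm.mp
      ((Fact.out : p.Prime).coprime_iff_not_dvd.mpr
        (MonoidHom.not_dvd_card_ker_transferSylow P hP')))
  · exact hc.symm.index_eq_card
end

section
/- Every group of square-free order is supersolvable. -/
open Subgroup

lemma cyclic_of_sf {A : Type*} [CommGroup A] [Finite A] (h : Squarefree (Nat.card A)) :
    IsCyclic A := by
  apply IsCyclic.of_exponent_eq_card
  have hdvd : Monoid.exponent A ∣ Nat.card A := Group.exponent_dvd_nat_card
  refine Nat.dvd_antisymm hdvd ?_
  have hne : Nat.card A ≠ 0 := h.ne_zero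
  have hexp : Monoid.exponent A ≠ 0 := Monoid.exponent_ne_zero_of_finite
  rw [← Nat.factorization_le_iff_dvd hne hexp]
  intro p
  rcases Nat.eq_zero_or_pos ((Nat.card A).factorization p) with h0 | hpos
  · simp [h0]
  · have hp : p.Prime := Nat.prime_of_mem_primeFactors
      ((Nat.support_factorization _) ▸ Finsupp.mem_support_iff.mpr hpos.ne')
    have hpd : p ∣ Nat.card A := Nat.dvd_of_factorization_pos hpos.ne'
    haveI := Fact.mk hp
    obtain ⟨g, hg⟩ := exists_prime_orderOf_dvd_card' p hpd
    have : p ∣ Monoid.exponent A := hg ▸ Monoid.order_dvd_exponent g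
    calc (Nat.card A).factorization p ≤ 1 := h.natFactorization_le_one p
      _ ≤ (Monoid.exponent A).factorization p :=
        (Nat.Prime.factorization_pos_of_dvd hp hexp this)

lemma cyclic_comap {G Q : Type*} [Group G] [Group Q] (f : G →* Q)
    (hf : Function.Surjective f) (H K : Subgroup Q) [hn : (H.subgroupOf K).Normal]
    [hc : IsCyclic (K ⧸ H.subgroupOf K)]
    [hn' : ((comap f H).subgroupOf (comap f K)).Normal] :
    IsCyclic ((comap f K) ⧸ (comap f H).subgroupOf (comap f K)) := by
  let φ₀ : (comap f K) →* K :=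
    (f.comp (comap f K).subtype).codRestrict K (fun x => x.2)
  let φ : (comap f K) →* (K ⧸ H.subgroupOf K) := (QuotientGroup.mk' _).comp φ₀
  have hsurj : Function.Surjective φ := by
    rintro ⟨y⟩
    obtain ⟨x, hx⟩ := hf (y : Q)
    exact ⟨⟨x, show f x ∈ K by rw [hx]; exact y.2⟩,
      congrArg (QuotientGroup.mk) (Subtype.ext hx)⟩
  have hker : φ.ker = (comap f H).subgroupOf (comap f K) := by
    ext x
    simp only [φ, φ₀, MonoidHom.mem_ker, MonoidHom.comp_apply, QuotientGroup.mk'_apply,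
      QuotientGroup.eq_one_iff, mem_subgroupOf, mem_comap]
    rfl
  have hle : (comap f H).subgroupOf (comap f K) ≤ φ.ker := le_of_eq hker.symm
  let ψ := QuotientGroup.lift _ φ hle
  have hsurj' : Function.Surjective ψ := by
    intro y
    obtain ⟨x, hx⟩ := hsurj y
    exact ⟨QuotientGroup.mk x, hx⟩
  have hinj : Function.Injective ψ := by
    rw [injective_iff_map_eq_one]
    intro a
    induction a using QuotientGroup.induction_on with
    | H x =>
      intro hx1
      have : x ∈ φ.ker := hx1
      rw [hker] at this
      exact (QuotientGroup.eq_one_iff x).mpr this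
  have e := MulEquiv.ofBijective ψ ⟨hinj, hsurj'⟩
  exact isCyclic_of_surjective e.symm e.symm.surjective

/-- A group is supersolvable if it has a chain of subgroups from `⊥` to `⊤`,
each normal in the whole group, with successive quotients cyclic. -/
def IsSupersolvable (G : Type*) [Group G] : Prop :=
  ∃ (k : ℕ) (s : Fin (k + 1) → Subgroup G) (hnorm : ∀ i, (s i).Normal),
    s 0 = ⊥ ∧ s (Fin.last k) = ⊤ ∧
      ∀ i : Fin k, s i.castSucc ≤ s i.succ ∧
        (letI := (hnorm i.castSucc).subgroupOf (s i.succ)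
         IsCyclic ((s i.succ) ⧸ (s i.castSucc).subgroupOf (s i.succ)))

lemma isCyclic_sub_quot_congr {G : Type*} [Group G] {K₁ K₂ H₁ H₂ : Subgroup G}
    (hK : K₁ = K₂) (hH : H₁ = H₂) [n1 : (H₁.subgroupOf K₁).Normal]
    [n2 : (H₂.subgroupOf K₂).Normal]
    (h : IsCyclic (K₁ ⧸ H₁.subgroupOf K₁)) : IsCyclic (K₂ ⧸ H₂.subgroupOf K₂) := by
  subst hK; subst hH; exact h

lemma isSupersolvable_of_subsingleton {G : Type*} [Group G] [Subsingleton G] :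
    IsSupersolvable G := by
  have hbt : (⊥ : Subgroup G) = ⊤ := by
    ext x; simp [Subsingleton.elim x 1]
  exact ⟨0, fun _ => ⊥, fun _ => inferInstance, rfl, hbt, fun i => i.elim0⟩

lemma isSupersolvable_of_cyclic_normal {G : Type*} [Group G] (N : Subgroup G) [hN : N.Normal]
    [hcN : IsCyclic N] (hq : IsSupersolvable (G ⧸ N)) : IsSupersolvable G := by
  obtain ⟨k, s, hnorm, h0, hlast, hstep⟩ := hq
  let f := QuotientGroup.mk' N
  have hfs : Function.Surjective f := QuotientGroup.mk'_surjective N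
  let t : Fin (k + 2) → Subgroup G := Fin.cases ⊥ (fun i => comap f (s i))
  have ht0 : t 0 = ⊥ := rfl
  have htsucc : ∀ i : Fin (k + 1), t i.succ = comap f (s i) := fun i => by
    simp [t]
  have hnorm' : ∀ i, (t i).Normal := by
    intro i
    induction i using Fin.cases with
    | zero => rw [ht0]; infer_instance
    | succ j =>
      rw [htsucc]
      exact Subgroup.Normal.comap (hnorm j) f
  refine ⟨k + 1, t, hnorm', ht0, ?_, ?_⟩
  · have : (Fin.last (k + 1)) = (Fin.last k).succ := rfl
    rw [this, htsucc, hlast, comap_top]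
  · intro i
    induction i using Fin.cases with
    | zero =>
      have hc0 : (Fin.castSucc (0 : Fin (k+1))) = (0 : Fin (k+2)) := rfl
      have hs0 : (Fin.succ (0 : Fin (k+1))) = (Fin.succ (0 : Fin (k+1))) := rfl
      constructor
      · rw [hc0, ht0]; exact bot_le
      · have hN' : t (Fin.succ (0 : Fin (k+1))) = N := by
          rw [htsucc, h0]
          ext x
          simp [f, QuotientGroup.eq_one_iff]
        haveI : IsCyclic (t (Fin.succ (0 : Fin (k+1)))) := by rw [hN']; exact hcN
        haveI : ((⊥ : Subgroup G).subgroupOf (t (Fin.succ (0 : Fin (k+1))))).Normal :=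
          Subgroup.Normal.subgroupOf inferInstance _
        have base : IsCyclic ((t (Fin.succ (0 : Fin (k+1)))) ⧸
            (⊥ : Subgroup G).subgroupOf (t (Fin.succ (0 : Fin (k+1))))) :=
          isCyclic_of_surjective _ (QuotientGroup.mk'_surjective
            ((⊥ : Subgroup G).subgroupOf (t (Fin.succ (0 : Fin (k+1))))))
        exact isCyclic_sub_quot_congr rfl (by rw [hc0, ht0]) base
    | succ j =>
      have hcs : (Fin.castSucc j.succ) = (Fin.succ j.castSucc) := by
        rw [Fin.succ_castSucc]
      constructor
      · rw [hcs, htsucc, htsucc]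
        exact comap_mono (hstep j).1
      · haveI := (hnorm j.castSucc).subgroupOf (s j.succ)
        haveI := (hstep j).2
        haveI : ((comap f (s j.castSucc)).subgroupOf (comap f (s j.succ))).Normal :=
          Subgroup.Normal.subgroupOf (Subgroup.Normal.comap (hnorm j.castSucc) f) _
        refine isCyclic_sub_quot_congr (htsucc j.succ).symm ?_
          (cyclic_comap f hfs (s j.castSucc) (s j.succ))
        rw [hcs, htsucc]

lemma solvable_of_sf : ∀ (n : ℕ), Squarefree n → ∀ (G : Type) [Group G] [Finite G],
    Nat.card G = n → Group.IsSolvable G := by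
  intro n
  induction n using Nat.strong_induction_on with
  | _ n ih =>
    intro hn G _ _ hcard
    rcases le_or_gt n 1 with h1 | h1
    · have hone : Nat.card G = 1 := le_antisymm (hcard ▸ h1) Nat.card_pos
      haveI : Subsingleton G := (Nat.card_eq_one_iff_unique.mp hone).1
      infer_instance
    · -- nontrivial case
      have hn0 : n ≠ 0 := by omega
      set p := n.minFac with hp_def
      have hp : p.Prime := Nat.minFac_prime (by omega)
      haveI := Fact.mk hp
      have hpn : p ∣ n := Nat.minFac_dvd n
      obtain ⟨P⟩ : Nonempty (Sylow p G) := inferInstance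
      -- card P = p
      have hfact : (Nat.card G).factorization p = 1 := by
        have hle : (Nat.card G).factorization p ≤ 1 := by
          rw [hcard]; exact hn.natFactorization_le_one p
        have hge : 1 ≤ (Nat.card G).factorization p := by
          rw [hcard]
          exact (Nat.Prime.factorization_pos_of_dvd hp hn0 hpn)
        omega
      have hcardP : Nat.card P = p := by
        rw [Sylow.card_eq_multiplicity, hfact, pow_one]
      haveI : IsCyclic P := isCyclic_of_prime_card hcardP
      -- normalizer ≤ centralizer
      have hP : Subgroup.normalizer ((P : Subgroup G) : Set G) ≤ Subgroup.centralizer ((P : Subgroup G) : Set G) := by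
        have hrange : ((P : Subgroup G).normalizerMonoidHom).range = ⊥ := by
          by_contra hne
          have hcr : Nat.card ((P : Subgroup G).normalizerMonoidHom).range ≠ 1 := by
            intro h1'
            exact hne (Subgroup.eq_bot_of_card_eq _ h1')
          set q := (Nat.card ((P : Subgroup G).normalizerMonoidHom).range).minFac with hq_def
          have hcr0 : Nat.card ((P : Subgroup G).normalizerMonoidHom).range ≠ 0 :=
            Nat.card_pos.ne'
          have hq : q.Prime := Nat.minFac_prime hcr
          -- q divides card G
          have hq1 : q ∣ Nat.card ((P : Subgroup G).normalizerMonoidHom).range :=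
            Nat.minFac_dvd _
          have hq2 : q ∣ n := by
            calc q ∣ Nat.card ((P : Subgroup G).normalizerMonoidHom).range := hq1
              _ ∣ Nat.card (Subgroup.normalizer ((P : Subgroup G) : Set G)) := by
                  have e := QuotientGroup.quotientKerEquivRange
                    ((P : Subgroup G).normalizerMonoidHom)
                  rw [← Nat.card_congr e.toEquiv]
                  exact Subgroup.card_quotient_dvd_card _
              _ ∣ Nat.card G := Subgroup.card_subgroup_dvd_card _
              _ = n := hcard
          -- q divides p - 1
          have hq3 : q ∣ p - 1 := by
            calc q ∣ Nat.card ((P : Subgroup G).normalizerMonoidHom).range := hq1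
              _ ∣ Nat.card (MulAut (P : Subgroup G)) := Subgroup.card_subgroup_dvd_card _
              _ = p - 1 := by
                  rw [IsCyclic.card_mulAut, hcardP, Nat.totient_prime hp]
          have hp2 : 2 ≤ p := hp.two_le
          have hq4 : p ≤ q := Nat.minFac_le_of_dvd hq.two_le hq2
          have hq5 : q ≤ p - 1 := Nat.le_of_dvd (by omega) hq3
          omega
        intro x hx
        have hker : (⟨x, hx⟩ : Subgroup.normalizer ((P : Subgroup G) : Set G)) ∈
            ((P : Subgroup G).normalizerMonoidHom).ker := by
          rw [MonoidHom.mem_ker]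
          have : ((P : Subgroup G).normalizerMonoidHom) ⟨x, hx⟩ ∈
              ((P : Subgroup G).normalizerMonoidHom).range := ⟨_, rfl⟩
          rw [hrange] at this
          exact this
        rw [Subgroup.normalizerMonoidHom_ker] at hker
        exact hker
      haveI : (P : Subgroup G).FiniteIndex := Subgroup.finiteIndex_of_finite_quotient (H := (P : Subgroup G))
      set N := (MonoidHom.transferSylow P hP).ker with hN_def
      -- card of quotient and of N
      have hcomp := MonoidHom.ker_transferSylow_isComplement' P hP
      have hidx : N.index = p := by
        rw [hcomp.symm.index_eq_card, hcardP]
      have hNcard : Nat.card N * p = n := by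
        rw [← hidx, Subgroup.card_mul_index N, hcard]
      have hNdvd : Nat.card N ∣ n := ⟨p, hNcard.symm⟩
      have hNlt : Nat.card N < n := by
        have : Nat.card N ≥ 1 := Nat.card_pos
        have hp2 : 2 ≤ p := hp.two_le
        nlinarith [hNcard]
      haveI : Group.IsSolvable N := ih _ hNlt (hn.squarefree_of_dvd hNdvd) N rfl
      haveI : Group.IsSolvable (G ⧸ N) := by
        have : Nat.card (G ⧸ N) = p := hidx
        haveI : IsCyclic (G ⧸ N) := isCyclic_of_prime_card this
        letI := IsCyclic.commGroup (α := G ⧸ N)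
        infer_instance
      exact solvable_of_ker_le_range N.subtype (QuotientGroup.mk' N)
        (by rw [QuotientGroup.ker_mk', Subgroup.range_subtype])

open scoped commutatorElement in
lemma supersolvable_of_sf : ∀ (n : ℕ), Squarefree n → ∀ (G : Type) [Group G] [Finite G],
    Nat.card G = n → IsSupersolvable G := by
  intro n
  induction n using Nat.strong_induction_on with
  | _ n ih =>
    intro hn G _ _ hcard
    rcases le_or_gt n 1 with h1 | h1
    · have hone : Nat.card G = 1 := le_antisymm (hcard ▸ h1) Nat.card_pos
      haveI : Subsingleton G := (Nat.card_eq_one_iff_unique.mp hone).1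
      exact isSupersolvable_of_subsingleton
    · haveI : Nontrivial G := Finite.one_lt_card_iff_nontrivial.mp (by omega)
      haveI hsolv : Group.IsSolvable G := solvable_of_sf n hn G hcard
      classical
      have hex : ∃ m, derivedSeries G m = ⊥ := (isSolvable_def G).mp hsolv
      set m := Nat.find hex with hm_def
      have hm_bot : derivedSeries G m = ⊥ := Nat.find_spec hex
      have hm_pos : 0 < m := by
        rcases Nat.eq_zero_or_pos m with h0 | h
        · exfalso
          have := hm_bot
          rw [h0, derivedSeries_zero] at this
          rw [Subgroup.eq_bot_iff_forall] at this
          obtain ⟨x, hx⟩ := exists_ne (1 : G)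
          exact hx (this x trivial)
        · exact h
      set A := derivedSeries G (m - 1) with hA_def
      have hA_ne : A ≠ ⊥ := Nat.find_min hex (by omega)
      have hA_comm : ⁅A, A⁆ = ⊥ := by
        have : derivedSeries G ((m - 1) + 1) = ⊥ := by
          rw [Nat.sub_add_cancel hm_pos]; exact hm_bot
        rw [derivedSeries_succ] at this
        exact this
      haveI hAnorm : A.Normal := derivedSeries_normal G (m - 1)
      haveI : IsMulCommutative A := by
        refine ⟨⟨fun a b => Subtype.ext ?_⟩⟩
        have hmem : ⁅(a : G), (b : G)⁆ ∈ ⁅A, A⁆ :=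
          Subgroup.commutator_mem_commutator a.2 b.2
        rw [hA_comm, Subgroup.mem_bot] at hmem
        exact (commutatorElement_eq_one_iff_mul_comm.mp hmem)
      have hAdvd : Nat.card A ∣ n := hcard ▸ Subgroup.card_subgroup_dvd_card A
      haveI : IsCyclic A := by
        letI : CommGroup A := { (inferInstance : Group A) with mul_comm := fun a b => Std.Commutative.comm a b }
        exact cyclic_of_sf (hn.squarefree_of_dvd hAdvd)
      haveI : Nontrivial A := (Subgroup.nontrivial_iff_ne_bot A).mpr hA_ne
      have hA2 : 2 ≤ Nat.card A := Finite.one_lt_card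
      have hqmul : Nat.card (G ⧸ A) * Nat.card A = n := by
        rw [← hcard, ← Subgroup.card_eq_card_quotient_mul_card_subgroup]
      have hqdvd : Nat.card (G ⧸ A) ∣ n := ⟨Nat.card A, hqmul.symm⟩
      have hqlt : Nat.card (G ⧸ A) < n := by
        have hq1 : 1 ≤ Nat.card (G ⧸ A) := Nat.card_pos
        nlinarith [hqmul]
      have hq : IsSupersolvable (G ⧸ A) :=
        ih _ hqlt (hn.squarefree_of_dvd hqdvd) (G ⧸ A) rfl
      exact isSupersolvable_of_cyclic_normal A hq

theorem stmt_11 (G : Type) [Group G] [Finite G] (h : Squarefree (Nat.card G)) :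
    IsSupersolvable G := supersolvable_of_sf (Nat.card G) h G rfl
end

section
/- Every group of square-free order is metacyclic, i.e., it has a cyclic normal subgroup with cyclic quotient. -/
open Subgroup
open scoped commutatorElement

lemma sqf_eq_of_dvd {n e : ℕ} (hn : Squarefree n) (he : e ∣ n)
    (h : ∀ p : ℕ, p.Prime → p ∣ n → p ∣ e) : e = n := by
  have hn0 : n ≠ 0 := hn.ne_zero
  have he0 : e ≠ 0 := fun h0 => hn0 (by simpa [h0] using he)
  refine Nat.dvd_antisymm he ?_
  rw [← Nat.factorization_le_iff_dvd hn0 he0]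
  intro p
  rcases Nat.eq_zero_or_pos (n.factorization p) with h0 | h1
  · simp [h0]
  · have hp : p.Prime := Nat.prime_of_mem_primeFactors
      ((Nat.support_factorization n) ▸ Finsupp.mem_support_iff.mpr h1.ne')
    have hpn : p ∣ n := Nat.dvd_of_mem_primeFactors
      ((Nat.support_factorization n) ▸ Finsupp.mem_support_iff.mpr h1.ne')
    have h2 : n.factorization p ≤ 1 := hn.natFactorization_le_one p
    have h3 : 1 ≤ e.factorization p :=
      (Nat.Prime.factorization_pos_of_dvd hp he0 (h p hp hpn))
    omega

lemma cyclic_of_comm_sqf {G : Type*} [Group G] [Finite G] (hsq : Squarefree (Nat.card G))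
    (hc : ∀ a b : G, a * b = b * a) : IsCyclic G := by
  letI : CommGroup G := { ‹Group G› with mul_comm := hc }
  refine IsCyclic.of_exponent_eq_card ?_
  refine sqf_eq_of_dvd hsq (Group.exponent_dvd_nat_card) ?_
  intro p hp hpn
  haveI : Fact p.Prime := ⟨hp⟩
  obtain ⟨x, hx⟩ := exists_prime_orderOf_dvd_card' (G := G) p (by simpa using hpn)
  exact hx ▸ Monoid.order_dvd_exponent x

lemma mulaut_comm {A : Type*} [Group A] [IsCyclic A] (σ τ : MulAut A) :
    σ * τ = τ * σ := by
  obtain ⟨g, hg⟩ := IsCyclic.exists_generator (α := A)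
  ext x
  obtain ⟨k, rfl⟩ := hg x
  obtain ⟨i, hi⟩ := hg (σ g)
  obtain ⟨j, hj⟩ := hg (τ g)
  simp only at hi hj
  simp only [MulAut.mul_apply, map_zpow, ← hi, ← hj, ← zpow_mul, mul_comm i j]

lemma sub_eq_of_le_card {G : Type*} [Group G] [Finite G] {H K : Subgroup G} (h : H ≤ K)
    (hc : Nat.card K ≤ Nat.card H) : H = K := by
  refine SetLike.ext' (Set.eq_of_subset_of_ncard_le h ?_ (Set.toFinite _))
  rwa [← Nat.card_coe_set_eq, ← Nat.card_coe_set_eq]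

lemma sylow_min_central {G : Type} [Group G] [Finite G] (hsq : Squarefree (Nat.card G))
    {p : ℕ} [hp : Fact p.Prime] (hpdvd : p ∣ Nat.card G)
    (hmin : ∀ q : ℕ, q.Prime → q ∣ Nat.card G → p ≤ q) (P : Sylow p G) :
    normalizer ((P : Subgroup G) : Set G) ≤ centralizer (P : Set G) := by
  have hcardP : Nat.card P = p := by
    rw [P.card_eq_multiplicity,
      Nat.factorization_eq_one_of_squarefree hsq hp.out hpdvd, pow_one]
  haveI : IsCyclic (P : Subgroup G) := isCyclic_of_prime_card hcardP
  have hAut : Nat.card (MulAut (P : Subgroup G)) = p - 1 := by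
    rw [IsCyclic.card_mulAut, hcardP, Nat.totient_prime hp.out]
  have key : ∀ x : normalizer ((P : Subgroup G) : Set G), (P : Subgroup G).normalizerMonoidHom x = 1 := by
    intro x
    set d := orderOf ((P : Subgroup G).normalizerMonoidHom x) with hd
    have hd1 : d ∣ p - 1 := hAut ▸ orderOf_dvd_natCard _
    have hd2 : d ∣ Nat.card G := by
      refine dvd_trans (orderOf_map_dvd _ x) (dvd_trans (orderOf_dvd_natCard x) ?_)
      exact Subgroup.card_subgroup_dvd_card _
    have hdone : d = 1 := by
      by_contra hne
      have hq : d.minFac.Prime := Nat.minFac_prime hne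
      have hq1 : d.minFac ∣ p - 1 := dvd_trans (Nat.minFac_dvd d) hd1
      have hq2 : p ≤ d.minFac := hmin d.minFac hq (dvd_trans (Nat.minFac_dvd d) hd2)
      have hp1 : 0 < p - 1 := by have := hp.out.two_le; omega
      have := Nat.le_of_dvd hp1 hq1
      omega
    rw [hd] at hdone; rwa [orderOf_eq_one_iff] at hdone
  intro x hx
  have hker := key ⟨x, hx⟩
  rw [← MonoidHom.mem_ker, Subgroup.normalizerMonoidHom_ker, Subgroup.mem_subgroupOf] at hker
  exact hker

lemma solvable_of_sqf : ∀ (n : ℕ) (G : Type) [Group G] [Finite G], Nat.card G = n →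
    Squarefree n → Group.IsSolvable G := by
  intro n
  induction n using Nat.strong_induction_on with
  | _ n ih =>
  intro G _ _ hn hsq
  subst hn
  rcases eq_or_ne (Nat.card G) 1 with h1 | h1
  · haveI : Subsingleton G := (Nat.card_eq_one_iff_unique.mp h1).1
    infer_instance
  · set p := (Nat.card G).minFac with hpdef
    haveI hp : Fact p.Prime := ⟨Nat.minFac_prime h1⟩
    obtain ⟨P⟩ : Nonempty (Sylow p G) := inferInstance
    have hP := sylow_min_central hsq (Nat.minFac_dvd _)
      (fun q hq hqd => Nat.minFac_le_of_dvd hq.two_le hqd) P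
    have hcardP : Nat.card P = p := by
      rw [P.card_eq_multiplicity,
        Nat.factorization_eq_one_of_squarefree hsq hp.out (Nat.minFac_dvd _), pow_one]
    haveI : IsCyclic (P : Subgroup G) := isCyclic_of_prime_card hcardP
    set K := (MonoidHom.transferSylow P hP).ker with hK
    have hcom := MonoidHom.ker_transferSylow_isComplement' P hP
    have hcards : Nat.card K * p = Nat.card G := by rw [← hcardP]; exact hcom.card_mul
    have hdvd : Nat.card K ∣ Nat.card G := ⟨p, hcards.symm⟩
    have hlt : Nat.card K < Nat.card G := by
      have h2 := hp.out.two_le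
      have hpos : 0 < Nat.card K := Nat.card_pos
      nlinarith [hcards]
    haveI : Group.IsSolvable K := ih _ hlt K rfl (hsq.squarefree_of_dvd hdvd)
    haveI : Group.IsSolvable (P : Subgroup G) := by
      letI := IsCyclic.commGroup (α := (P : Subgroup G))
      infer_instance
    exact solvable_of_ker_le_range K.subtype (MonoidHom.transferSylow P hP)
      (le_of_eq (K.range_subtype).symm)

theorem stmt_12 (G : Type) [Group G] [Finite G] (h : Squarefree (Nat.card G)) :
    ∃ H : Subgroup G, ∃ hn : H.Normal, IsCyclic H ∧
      (letI := hn; IsCyclic (G ⧸ H)) := by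
  haveI hsolv : Group.IsSolvable G := solvable_of_sqf _ G rfl h
  -- pick a maximal normal "abelian" subgroup A
  set S : Set (Subgroup G) := {A | A.Normal ∧ ∀ a b : G, a ∈ A → b ∈ A → a * b = b * a} with hS
  have hbot : (⊥ : Subgroup G) ∈ S := by
    refine ⟨inferInstance, ?_⟩
    intro a b ha hb
    rw [Subgroup.mem_bot] at ha hb
    rw [ha, hb]
  obtain ⟨A, hAS, hAmax⟩ := Set.Finite.exists_maximalFor (fun A : Subgroup G => Nat.card A) S
    (Set.toFinite S) ⟨⊥, hbot⟩
  obtain ⟨hAnormal, hAcomm⟩ := hAS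
  haveI := hAnormal
  haveI hAcyc : IsCyclic A := by
    refine cyclic_of_comm_sqf (h.squarefree_of_dvd (Subgroup.card_subgroup_dvd_card A)) ?_
    intro a b
    exact Subtype.ext (hAcomm a b a.2 b.2)
  -- A is self-centralizing
  set C := centralizer (A : Set G) with hC
  have hAleC : A ≤ C := by
    intro a ha
    rw [Subgroup.mem_centralizer_iff]
    intro g hg
    exact hAcomm g a hg ha
  haveI hCnormal : C.Normal := by
    constructor
    intro c hc g
    rw [Subgroup.mem_centralizer_iff] at hc ⊢
    intro a ha
    have h' : (g⁻¹ * a * g) * c = c * (g⁻¹ * a * g) := by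
      rw [hc _ (by simpa using hAnormal.conj_mem a ha g⁻¹)]
    calc a * (g * c * g⁻¹) = g * ((g⁻¹ * a * g) * c) * g⁻¹ := by group
      _ = g * (c * (g⁻¹ * a * g)) * g⁻¹ := by rw [h']
      _ = (g * c * g⁻¹) * a := by group
  have hcent : C = A := by
    by_contra hne
    have hAltC : A < C := lt_of_le_of_ne hAleC (Ne.symm hne)
    -- pick B of minimal cardinality among normal subgroups with A < B ≤ C
    set T : Set (Subgroup G) := {B | B.Normal ∧ A < B ∧ B ≤ C} with hT
    have hCT : C ∈ T := ⟨hCnormal, hAltC, le_refl C⟩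
    obtain ⟨B, hBT, hBmin⟩ := Set.Finite.exists_minimalFor (fun B : Subgroup G => Nat.card B) T
      (Set.toFinite T) ⟨C, hCT⟩
    obtain ⟨hBnormal, hABlt, hBC⟩ := hBT
    haveI := hBnormal
    have hmin_eq : ∀ B₂ ∈ T, B₂ ≤ B → B₂ = B := by
      intro B₂ hB₂ hle
      exact sub_eq_of_le_card hle (hBmin hB₂ (Subgroup.card_le_of_le hle))
    set π := QuotientGroup.mk' A with hπ
    set Bbar := B.map π with hBbar
    haveI hBbarnormal : Bbar.Normal := hBnormal.map π (QuotientGroup.mk'_surjective A)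
    have hBbar_ne : ∃ x : G ⧸ A, x ∈ Bbar ∧ x ≠ 1 := by
      obtain ⟨b, hbB, hbA⟩ := SetLike.exists_of_lt hABlt
      refine ⟨π b, Subgroup.mem_map_of_mem π hbB, ?_⟩
      simpa [hπ, QuotientGroup.eq_one_iff] using hbA
    -- step 1 : ⁅B,B⁆ ≤ A
    have hDer : ⁅B, B⁆ ≤ A := by
      set D := A ⊔ ⁅B, B⁆ with hD
      have hDB : D ≤ B := sup_le hABlt.le (Subgroup.commutator_le_left B B)
      have hDC : D ≤ C := le_trans hDB hBC
      rcases eq_or_ne D A with hDA | hDA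
      · rw [← hDA, hD]
        exact le_sup_right
      · exfalso
        have hAD : A < D := lt_of_le_of_ne le_sup_left (Ne.symm hDA)
        have hDT : D ∈ T := ⟨inferInstance, hAD, hDC⟩
        have hDeq : D = B := hmin_eq D hDT hDB
        -- then Bbar is its own commutator, contradicting solvability
        have hmapA : A.map π = ⊥ := by
          rw [Subgroup.map_eq_bot_iff, hπ, QuotientGroup.ker_mk']
        have hBB : ⁅Bbar, Bbar⁆ = Bbar := by
          rw [hBbar, ← Subgroup.map_commutator]
          conv_rhs => rw [← hDeq]
          rw [hD, Subgroup.map_sup, hmapA, bot_sup_eq]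
        obtain ⟨x, hxB, hx1⟩ := hBbar_ne
        have hcomm_top : commutator Bbar = ⊤ := by
          apply Subgroup.map_injective Bbar.subtype_injective
          rw [_root_.commutator_def, Subgroup.map_commutator,
            ← MonoidHom.range_eq_map, Subgroup.range_subtype]
          exact hBB
        have hderiv : ∀ n, derivedSeries Bbar n = ⊤ := by
          intro n
          induction n with
          | zero => exact derivedSeries_zero _
          | succ n ihn => rw [derivedSeries_succ, ihn, ← _root_.commutator_def, hcomm_top]
        obtain ⟨n, hns⟩ := (inferInstance : Group.IsSolvable Bbar).solvable
        have hx1' : (⟨x, hxB⟩ : Bbar) = 1 := by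
          have hmem : (⟨x, hxB⟩ : Bbar) ∈ (⊥ : Subgroup Bbar) := by
            rw [← hns, hderiv n]; trivial
          simpa using hmem
        exact hx1 (congrArg Subtype.val hx1')
    -- commutativity of Bbar
    have hBbar_comm : ∀ x y : G ⧸ A, x ∈ Bbar → y ∈ Bbar → x * y = y * x := by
      intro x y hx hy
      obtain ⟨b1, hb1, rfl⟩ := hx
      obtain ⟨b2, hb2, rfl⟩ := hy
      have key : (b1 * b2)⁻¹ * (b2 * b1) ∈ A := by
        have heq : (b1 * b2)⁻¹ * (b2 * b1) = ⁅b2⁻¹, b1⁻¹⁆ := by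
          rw [commutatorElement_def]; group
        rw [heq]
        exact hDer (Subgroup.commutator_mem_commutator (B.inv_mem hb2) (B.inv_mem hb1))
      calc π b1 * π b2 = π (b1 * b2) := (map_mul π b1 b2).symm
        _ = π (b2 * b1) := by
            rw [hπ]
            show ((b1 * b2 : G) : G ⧸ A) = ((b2 * b1 : G) : G ⧸ A)
            rw [QuotientGroup.eq]
            exact key
        _ = π b2 * π b1 := map_mul π b2 b1
    obtain ⟨x0, hx0B, hx01⟩ := hBbar_ne
    haveI : Nontrivial Bbar :=
      ⟨⟨⟨x0, hx0B⟩, 1, fun hh => hx01 (congrArg Subtype.val hh)⟩⟩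
    set q := (Nat.card Bbar).minFac with hq
    haveI hqp : Fact q.Prime := ⟨Nat.minFac_prime (Finite.one_lt_card (α := Bbar)).ne'⟩
    -- the subgroup of elements of Bbar killed by q
    set Ω : Subgroup (G ⧸ A) :=
      { carrier := {x | x ∈ Bbar ∧ x ^ q = 1}
        one_mem' := ⟨Bbar.one_mem, one_pow q⟩
        mul_mem' := fun {x y} hx hy => ⟨Bbar.mul_mem hx.1 hy.1, by
          rw [Commute.mul_pow (hBbar_comm x y hx.1 hy.1), hx.2, hy.2, one_mul]⟩
        inv_mem' := fun {x} hx => ⟨Bbar.inv_mem hx.1, by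
          rw [inv_pow, hx.2, inv_one]⟩ } with hΩ
    haveI hΩnormal : Ω.Normal := by
      constructor
      intro x hx g
      refine ⟨hBbarnormal.conj_mem x hx.1 g, ?_⟩
      rw [conj_pow, hx.2, mul_one, mul_inv_cancel]
    -- pull back to G
    set B₂ := Ω.comap π with hB₂
    haveI : B₂.Normal := hΩnormal.comap π
    have hAB₂ : A ≤ B₂ := by
      intro a ha
      show π a ∈ Ω
      have : π a = 1 := by simpa [hπ, QuotientGroup.eq_one_iff] using ha
      rw [this]; exact Ω.one_mem
    have hB₂B : B₂ ≤ B := by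
      intro x hx
      have hxΩ : π x ∈ Ω := hx
      obtain ⟨b, hbB, hbe⟩ := hxΩ.1
      have : b⁻¹ * x ∈ A := by
        rw [← QuotientGroup.eq]
        exact hbe
      have hbx : x = b * (b⁻¹ * x) := by group
      rw [hbx]
      exact B.mul_mem hbB (hABlt.le this)
    have hAltB₂ : A < B₂ := by
      obtain ⟨xb, hxb⟩ := exists_prime_orderOf_dvd_card' (G := Bbar) q (Nat.minFac_dvd _)
      have hxbq : (xb : G ⧸ A) ^ q = 1 := by
        rw [← hxb]
        exact_mod_cast congrArg Subtype.val (pow_orderOf_eq_one xb)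
      have hxΩ : (xb : G ⧸ A) ∈ Ω := ⟨xb.2, hxbq⟩
      have hxbne : (xb : G ⧸ A) ≠ 1 := by
        intro h1
        have : xb = 1 := Subtype.ext h1
        rw [this, orderOf_one] at hxb
        exact hqp.out.one_lt.ne hxb
      obtain ⟨b, hbB, hbe⟩ := xb.2
      refine lt_of_le_of_ne hAB₂ fun hcon => ?_
      have hbB₂ : b ∈ B₂ := by
        show π b ∈ Ω
        rw [hπ] at hbe ⊢
        rw [hbe]
        exact hxΩ
      rw [← hcon] at hbB₂
      have : π b = 1 := by simpa [hπ, QuotientGroup.eq_one_iff] using hbB₂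
      rw [hπ] at this hbe
      exact hxbne (by rw [← hbe, this])
    have hB₂T : B₂ ∈ T := ⟨inferInstance, hAltB₂, le_trans hB₂B hBC⟩
    have hB₂eq : B₂ = B := hmin_eq B₂ hB₂T hB₂B
    -- every element of Bbar has order dividing q
    have hexp : ∀ x : G ⧸ A, x ∈ Bbar → x ^ q = 1 := by
      intro x hx
      obtain ⟨b, hbB, rfl⟩ := hx
      rw [← hB₂eq] at hbB
      exact (hbB : π b ∈ Ω).2
    have hsqfBbar : Squarefree (Nat.card Bbar) :=
      h.squarefree_of_dvd (dvd_trans (Subgroup.card_subgroup_dvd_card Bbar)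
        (Subgroup.card_quotient_dvd_card A))
    have hcardBbar : Nat.card Bbar = q := by
      refine (sqf_eq_of_dvd hsqfBbar (Nat.minFac_dvd _) ?_).symm
      intro r hr hrd
      haveI : Fact r.Prime := ⟨hr⟩
      obtain ⟨y, hy⟩ := exists_prime_orderOf_dvd_card' (G := Bbar) r hrd
      have hyq : y ^ q = 1 := by
        have : (y : G ⧸ A) ^ q = 1 := hexp _ y.2
        exact Subtype.ext (by exact_mod_cast this)
      rw [← hy]
      exact orderOf_dvd_of_pow_eq_one hyq
    haveI : IsCyclic Bbar := isCyclic_of_prime_card hcardBbar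
    -- B is abelian : B / (A ∩ B) ≅ Bbar is cyclic and A ∩ B is central in B
    set f : B →* Bbar := (π.comp B.subtype).codRestrict Bbar
      (fun b => Subgroup.mem_map_of_mem π b.2) with hf
    have hfker : f.ker ≤ Subgroup.center B := by
      intro b hb
      have hbA : (b : G) ∈ A := by
        have : π (b : G) = 1 := congrArg Subtype.val (hb : f b = 1)
        simpa [hπ, QuotientGroup.eq_one_iff] using this
      rw [Subgroup.mem_center_iff]
      intro c
      have hcC : (c : G) ∈ C := hBC c.2
      rw [hC, Subgroup.mem_centralizer_iff] at hcC
      exact Subtype.ext (by push_cast; exact (hcC _ hbA).symm)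
    have hBcomm : ∀ a b : B, a * b = b * a := commutative_of_cyclic_center_quotient f hfker
    have hBS : B ∈ S := ⟨hBnormal, fun a b ha hb => Subtype.ext_iff.mp (hBcomm ⟨a, ha⟩ ⟨b, hb⟩)⟩
    have hcardeq := hAmax hBS (Subgroup.card_le_of_le hABlt.le)
    exact hABlt.ne (sub_eq_of_le_card hABlt.le hcardeq)
  -- conclusion
  haveI : IsCyclic A := hAcyc
  have hqcomm : ∀ x y : G ⧸ A, x * y = y * x := by
    intro x y
    obtain ⟨g, rfl⟩ := QuotientGroup.mk_surjective x
    obtain ⟨k, rfl⟩ := QuotientGroup.mk_surjective y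
    show ((g : G ⧸ A) * k) = _
    rw [← QuotientGroup.mk_mul, ← QuotientGroup.mk_mul, QuotientGroup.eq]
    have heq : (g * k)⁻¹ * (k * g) = ⁅k⁻¹, g⁻¹⁆ := by
      rw [commutatorElement_def]; group
    rw [heq, ← hcent, hC]
    rw [Subgroup.mem_centralizer_iff]
    intro a ha
    set φ : G →* MulAut A := MulAut.conjNormal with hφ
    have hφ1 : φ ⁅k⁻¹, g⁻¹⁆ = 1 := by
      rw [map_commutatorElement]
      rw [commutatorElement_eq_one_iff_commute]
      exact mulaut_comm _ _
    have hfix : ⁅k⁻¹, g⁻¹⁆ * a * ⁅k⁻¹, g⁻¹⁆⁻¹ = a := by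
      have := congrArg (fun σ : MulAut A => ((σ ⟨a, ha⟩ : A) : G)) hφ1
      simpa only [hφ, MulAut.conjNormal_apply, MulAut.one_apply] using this
    calc a * ⁅k⁻¹, g⁻¹⁆ = (⁅k⁻¹, g⁻¹⁆ * a * ⁅k⁻¹, g⁻¹⁆⁻¹) * ⁅k⁻¹, g⁻¹⁆ := by rw [hfix]
      _ = ⁅k⁻¹, g⁻¹⁆ * a := by group
  have hqcyc : IsCyclic (G ⧸ A) :=
    cyclic_of_comm_sqf (h.squarefree_of_dvd (Subgroup.card_quotient_dvd_card A)) hqcomm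
  exact ⟨A, hAnormal, hAcyc, hqcyc⟩
end
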